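/- arXiv:2409.20440 — 4 statements merged into one kernel-verified Lean document; each statement's English description precedes it below -/
import Mathlib

section
/- (Corollary 2, hybrid Fréchet regularizers.) Let K ≥ 1, let G_1 and G_2 be marginal generators, and let γ_1, γ_2 > 0. The function H = γ_1 G_1^{-1} + γ_2 G_2^{-1} : (0,1) → ℝ is strictly increasing; define F as its generalized inverse, F(x) = sup{t ∈ (0,1) : H(t) ≤ x} (with sup ∅ = 0), and let B be the marginal ambiguity set with marginal CDFs F_k(s) = min{1, max{0, 1 − F(−s)}} for all k ∈ [K]. Define g_1(s) = ∫_0^s G_1^{-1}(t) dt and g_2(s) = ∫_0^s G_2^{-1}(t) dt for s ∈ [0,1]. Then Φ(u;B) = max_{p ∈ Δ^K} [ Σ_{k=1}^K u_k p_k − Σ_{k=1}^K ( γ_1 g_1(p_k) + γ_2 g_2(p_k) ) ] for every u ∈ ℝ^K. -/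
open MeasureTheory Set Filter
open scoped ENNReal NNReal

noncomputable def simplex (K : ℕ) : Set (Fin K → ℝ) :=
  {p | (∀ k, 0 ≤ p k) ∧ ∑ k, p k = 1}

noncomputable def quantile (F : ℝ → ℝ) (s : ℝ) : ℝ := sInf {t | s ≤ F t}

def marginalSet {K : ℕ} (F : Fin K → ℝ → ℝ) : Set (Measure (Fin K → ℝ)) :=
  {Q | IsProbabilityMeasure Q ∧ ∀ k s, Q {z | z k ≤ s} = ENNReal.ofReal (F k s)}

noncomputable def Phi {K : ℕ} (F : Fin K → ℝ → ℝ) (u : Fin K → ℝ) : ℝ :=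
  sSup {x | ∃ Q ∈ marginalSet F, x = ∫ z, (⨆ k, u k + z k) ∂Q}

namespace Frechet

variable {G : ℝ → ℝ}

lemma gen_surj (hm : StrictMono G) (hc : Continuous G)
    (hbot : ∀ ε > (0:ℝ), ∃ s, G s < ε) (htop : ∀ ε > (0:ℝ), ∃ s, 1 - ε < G s)
    {y : ℝ} (hy : y ∈ Ioo (0:ℝ) 1) : ∃ c, G c = y := by
  obtain ⟨a, ha⟩ := hbot y hy.1
  obtain ⟨b, hb⟩ := htop (1 - y) (by linarith [hy.2])
  have hb' : y < G b := by linarith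
  have hab : a ≤ b := (hm.lt_iff_lt.mp (ha.trans hb')).le
  obtain ⟨c, _, hc'⟩ := intermediate_value_Icc hab hc.continuousOn ⟨ha.le, hb'.le⟩
  exact ⟨c, hc'⟩

lemma quantile_eq (hm : StrictMono G) {c y : ℝ} (hcy : G c = y) : quantile G y = c := by
  unfold quantile
  have : {t | y ≤ G t} = Ici c := by
    ext t; simp only [mem_setOf_eq, mem_Ici, ← hcy, hm.le_iff_le]
  rw [this, csInf_Ici]

lemma quantile_eval (hm : StrictMono G) (hc : Continuous G)
    (hbot : ∀ ε > (0:ℝ), ∃ s, G s < ε) (htop : ∀ ε > (0:ℝ), ∃ s, 1 - ε < G s)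
    {y : ℝ} (hy : y ∈ Ioo (0:ℝ) 1) : G (quantile G y) = y := by
  obtain ⟨c, hc'⟩ := gen_surj hm hc hbot htop hy
  rw [quantile_eq hm hc', hc']

lemma quantile_strictMonoOn (hm : StrictMono G) (hc : Continuous G)
    (hbot : ∀ ε > (0:ℝ), ∃ s, G s < ε) (htop : ∀ ε > (0:ℝ), ∃ s, 1 - ε < G s) :
    StrictMonoOn (quantile G) (Ioo (0:ℝ) 1) := by
  intro y hy y' hy' hlt
  have h1 := quantile_eval hm hc hbot htop hy
  have h2 := quantile_eval hm hc hbot htop hy'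
  apply hm.lt_iff_lt.mp
  rw [h1, h2]; exact hlt

lemma quantile_continuousOn (hm : StrictMono G) (hc : Continuous G)
    (hbot : ∀ ε > (0:ℝ), ∃ s, G s < ε) (htop : ∀ ε > (0:ℝ), ∃ s, 1 - ε < G s) :
    ContinuousOn (quantile G) (Ioo (0:ℝ) 1) := by
  intro y hy
  rw [Metric.continuousWithinAt_iff]
  intro ε hε
  set q := quantile G with hq
  have hqy : G (q y) = y := quantile_eval hm hc hbot htop hy
  have h1 : y < G (q y + ε/2) := by
    have : G (q y) < G (q y + ε/2) := hm (by linarith)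
    rwa [hqy] at this
  have h2 : G (q y - ε/2) < y := by
    have : G (q y - ε/2) < G (q y) := hm (by linarith)
    rwa [hqy] at this
  refine ⟨min (G (q y + ε/2) - y) (y - G (q y - ε/2)), by simp [h1, h2, sub_pos], ?_⟩
  intro y' hy' hd
  have hqy' : G (q y') = y' := quantile_eval hm hc hbot htop hy'
  rw [Real.dist_eq] at hd ⊢
  have hd1 : |y' - y| < G (q y + ε/2) - y := lt_of_lt_of_le hd (min_le_left _ _)
  have hd2 : |y' - y| < y - G (q y - ε/2) := lt_of_lt_of_le hd (min_le_right _ _)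
  rw [abs_lt] at hd1 hd2
  have hu : q y' < q y + ε/2 := by
    apply hm.lt_iff_lt.mp; rw [hqy']; linarith
  have hl : q y - ε/2 < q y' := by
    apply hm.lt_iff_lt.mp; rw [hqy']; linarith
  rw [abs_lt]; constructor <;> linarith

variable {H F : ℝ → ℝ}

section Flem

variable (hHsm : StrictMonoOn H (Ioo (0:ℝ) 1))
    (hFdef : ∀ x, F x = sSup {t | t ∈ Ioo (0:ℝ) 1 ∧ H t ≤ x})

include hFdef

lemma F_nonneg (x : ℝ) : 0 ≤ F x := by
  rw [hFdef]
  rcases eq_empty_or_nonempty {t | t ∈ Ioo (0:ℝ) 1 ∧ H t ≤ x} with h | h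
  · rw [h, Real.sSup_empty]
  · obtain ⟨t, ht⟩ := h
    exact ht.1.1.le.trans (le_csSup ⟨1, fun r hr => hr.1.2.le⟩ ht)

lemma F_le_one (x : ℝ) : F x ≤ 1 := by
  rw [hFdef]; exact Real.sSup_le (fun t ht => ht.1.2.le) zero_le_one

lemma le_F {t x : ℝ} (ht : t ∈ Ioo (0:ℝ) 1) (hle : H t ≤ x) : t ≤ F x := by
  rw [hFdef]; exact le_csSup ⟨1, fun r hr => hr.1.2.le⟩ ⟨ht, hle⟩

include hHsm in
lemma lt_F_imp {t x : ℝ} (ht : t ∈ Ioo (0:ℝ) 1) (hlt : t < F x) : H t < x := by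
  rw [hFdef] at hlt
  have hne : {r | r ∈ Ioo (0:ℝ) 1 ∧ H r ≤ x}.Nonempty := by
    rcases eq_empty_or_nonempty {r | r ∈ Ioo (0:ℝ) 1 ∧ H r ≤ x} with he | h
    · rw [he, Real.sSup_empty] at hlt; linarith [ht.1]
    · exact h
  obtain ⟨t', ht', hlt'⟩ := exists_lt_of_lt_csSup hne hlt
  exact lt_of_lt_of_le (hHsm ht ht'.1 hlt') ht'.2

include hHsm in
lemma F_lt_imp {t x : ℝ} (ht : t ∈ Ioo (0:ℝ) 1) (hlt : F x < t) : x < H t := by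
  by_contra h
  push_neg at h
  exact absurd (le_F hFdef ht h) (not_le.mpr hlt)

lemma F_mono : Monotone F := by
  intro a b hab
  rcases eq_empty_or_nonempty {t | t ∈ Ioo (0:ℝ) 1 ∧ H t ≤ a} with he | hne
  · rw [hFdef a, he, Real.sSup_empty]; exact F_nonneg hFdef b
  · rw [hFdef a, hFdef b]
    exact csSup_le_csSup ⟨1, fun r hr => hr.1.2.le⟩ hne fun t ht => ⟨ht.1, ht.2.trans hab⟩

include hHsm in
lemma F_exists_left (x : ℝ) {ε : ℝ} (hε : 0 < ε) : ∃ y < x, F x - ε < F y := by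
  by_cases hc : F x - ε < 0
  · exact ⟨x - 1, by linarith, lt_of_lt_of_le hc (F_nonneg hFdef _)⟩
  push_neg at hc
  have hFx : ε ≤ F x := by linarith
  obtain ⟨t, ht0, ht1, hgt⟩ : ∃ t, 0 < t ∧ t < F x ∧ F x - ε < t := by
    refine ⟨F x - min ε (F x) / 2, ?_, ?_, ?_⟩
    · have h1 : min ε (F x) ≤ F x := min_le_right _ _
      have h2 : 0 < min ε (F x) := lt_min hε (lt_of_lt_of_le hε hFx)
      linarith
    · have h2 : 0 < min ε (F x) := lt_min hε (lt_of_lt_of_le hε hFx)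
      linarith
    · have h1 : min ε (F x) ≤ ε := min_le_left _ _
      have h2 : 0 < min ε (F x) := lt_min hε (lt_of_lt_of_le hε hFx)
      linarith
  have htI : t ∈ Ioo (0:ℝ) 1 := ⟨ht0, lt_of_lt_of_le ht1 (F_le_one hFdef x)⟩
  have hHt : H t < x := lt_F_imp hHsm hFdef htI ht1
  refine ⟨(H t + x) / 2, by linarith, ?_⟩
  have hle : t ≤ F ((H t + x) / 2) := le_F hFdef htI (by linarith)
  linarith

include hHsm in
lemma F_exists_right (x : ℝ) {ε : ℝ} (hε : 0 < ε) : ∃ y > x, F y < F x + ε := by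
  by_cases hc : 1 < F x + ε
  · exact ⟨x + 1, by linarith, lt_of_le_of_lt (F_le_one hFdef _) hc⟩
  push_neg at hc
  have hFx0 : 0 ≤ F x := F_nonneg hFdef x
  obtain ⟨t, ht1, htlt, htε⟩ : ∃ t, F x < t ∧ t < 1 ∧ t < F x + ε := by
    refine ⟨F x + min ε (1 - F x) / 2, ?_, ?_, ?_⟩
    · have h2 : 0 < min ε (1 - F x) := lt_min hε (by linarith)
      linarith
    · have h1 : min ε (1 - F x) ≤ 1 - F x := min_le_right _ _
      have h2 : 0 < min ε (1 - F x) := lt_min hε (by linarith)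
      linarith
    · have h1 : min ε (1 - F x) ≤ ε := min_le_left _ _
      linarith
  have htI : t ∈ Ioo (0:ℝ) 1 := ⟨lt_of_le_of_lt hFx0 ht1, htlt⟩
  by_contra h
  push_neg at h
  have hHle : H t ≤ x := by
    by_contra h2
    push_neg at h2
    have hy : x < (x + H t) / 2 := by linarith
    have := h _ hy
    have : t < F ((x + H t) / 2) := lt_of_lt_of_le htε this
    have := lt_F_imp hHsm hFdef htI this
    linarith
  exact absurd (le_F hFdef htI hHle) (not_le.mpr ht1)

include hHsm in
lemma F_cont : Continuous F := by
  rw [Metric.continuous_iff]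
  intro x ε hε
  obtain ⟨y₁, hy₁, hF₁⟩ := F_exists_left hHsm hFdef x (half_pos hε)
  obtain ⟨y₂, hy₂, hF₂⟩ := F_exists_right hHsm hFdef x (half_pos hε)
  refine ⟨min (x - y₁) (y₂ - x), lt_min (by linarith) (by linarith), ?_⟩
  intro y hd
  rw [Real.dist_eq] at hd ⊢
  have hd1 : |y - x| < x - y₁ := lt_of_lt_of_le hd (min_le_left _ _)
  have hd2 : |y - x| < y₂ - x := lt_of_lt_of_le hd (min_le_right _ _)
  rw [abs_lt] at hd1 hd2
  have h1 : F y₁ ≤ F y := F_mono hFdef (by linarith)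
  have h2 : F y ≤ F y₂ := F_mono hFdef (by linarith)
  rw [abs_lt]; constructor <;> linarith

include hHsm in
lemma vol_le_eq (y : ℝ) :
    volume {t | t ∈ Ioo (0:ℝ) 1 ∧ H t ≤ y} = ENNReal.ofReal (F y) := by
  apply le_antisymm
  · calc volume {t | t ∈ Ioo (0:ℝ) 1 ∧ H t ≤ y} ≤ volume (Ioc 0 (F y)) := by
          apply measure_mono
          intro t ht
          exact ⟨ht.1.1, le_F hFdef ht.1 ht.2⟩
      _ = ENNReal.ofReal (F y) := by rw [Real.volume_Ioc, sub_zero]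
  · calc ENNReal.ofReal (F y) = volume (Ioo 0 (F y)) := by rw [Real.volume_Ioo, sub_zero]
      _ ≤ volume {t | t ∈ Ioo (0:ℝ) 1 ∧ H t ≤ y} := by
          apply measure_mono
          intro t ht
          have htI : t ∈ Ioo (0:ℝ) 1 := ⟨ht.1, lt_of_lt_of_le ht.2 (F_le_one hFdef y)⟩
          exact ⟨htI, (lt_F_imp hHsm hFdef htI ht.2).le⟩

include hHsm in
lemma vol_ge_eq (y : ℝ) :
    volume {t | t ∈ Ioo (0:ℝ) 1 ∧ y ≤ H t} = ENNReal.ofReal (1 - F y) := by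
  apply le_antisymm
  · calc volume {t | t ∈ Ioo (0:ℝ) 1 ∧ y ≤ H t} ≤ volume (Ico (F y) 1) := by
          apply measure_mono
          intro t ht
          refine ⟨?_, ht.1.2⟩
          by_contra hlt
          push_neg at hlt
          exact absurd ht.2 (not_le.mpr (lt_F_imp hHsm hFdef ht.1 hlt))
      _ = ENNReal.ofReal (1 - F y) := by rw [Real.volume_Ico]
  · calc ENNReal.ofReal (1 - F y) = volume (Ioo (F y) 1) := by rw [Real.volume_Ioo]
      _ ≤ volume {t | t ∈ Ioo (0:ℝ) 1 ∧ y ≤ H t} := by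
          apply measure_mono
          intro t ht
          have htI : t ∈ Ioo (0:ℝ) 1 := ⟨lt_of_le_of_lt (F_nonneg hFdef y) ht.1, ht.2⟩
          exact ⟨htI, (F_lt_imp hHsm hFdef htI ht.1).le⟩

include hHsm in
lemma setS_meas (y : ℝ) : MeasurableSet {t | t ∈ Ioo (0:ℝ) 1 ∧ H t ≤ y} := by
  have hrep : {t | t ∈ Ioo (0:ℝ) 1 ∧ H t ≤ y}
      = Ioo 0 (F y) ∪ ({t | t ∈ Ioo (0:ℝ) 1 ∧ H t ≤ y} ∩ {F y}) := by
    apply Subset.antisymm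
    · intro t ht
      rcases lt_or_eq_of_le (le_F hFdef ht.1 ht.2) with h | h
      · exact Or.inl ⟨ht.1.1, h⟩
      · exact Or.inr ⟨ht, h⟩
    · apply union_subset
      · intro t ht
        have htI : t ∈ Ioo (0:ℝ) 1 := ⟨ht.1, lt_of_lt_of_le ht.2 (F_le_one hFdef y)⟩
        exact ⟨htI, (lt_F_imp hHsm hFdef htI ht.2).le⟩
      · exact inter_subset_left
  rw [hrep]
  exact measurableSet_Ioo.union
    (((countable_singleton (F y)).mono inter_subset_right).measurableSet)

include hHsm in
lemma Ht_meas : Measurable (fun t => if t ∈ Ioo (0:ℝ) 1 then H t else 0) := by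
  apply measurable_of_Iic
  intro y
  by_cases hy : (0:ℝ) ≤ y
  · have : (fun t => if t ∈ Ioo (0:ℝ) 1 then H t else 0) ⁻¹' Iic y
        = {t | t ∈ Ioo (0:ℝ) 1 ∧ H t ≤ y} ∪ (Ioo (0:ℝ) 1)ᶜ := by
      ext t
      simp only [mem_preimage, mem_Iic, mem_union, mem_setOf_eq, mem_compl_iff]
      split_ifs with h <;> simp [h, hy]
    rw [this]
    exact (setS_meas hHsm hFdef y).union measurableSet_Ioo.compl
  · have : (fun t => if t ∈ Ioo (0:ℝ) 1 then H t else 0) ⁻¹' Iic y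
        = {t | t ∈ Ioo (0:ℝ) 1 ∧ H t ≤ y} := by
      ext t
      simp only [mem_preimage, mem_Iic, mem_setOf_eq]
      split_ifs with h <;> simp [h, hy]
    rw [this]
    exact setS_meas hHsm hFdef y

end Flem


section Tonelli

variable {H F : ℝ → ℝ}
variable (hHsm : StrictMonoOn H (Ioo (0:ℝ) 1))
    (hFdef : ∀ x, F x = sSup {t | t ∈ Ioo (0:ℝ) 1 ∧ H t ≤ x})

include hHsm hFdef

lemma tonelli_T1 (c : ℝ) :
    ∫⁻ x in Ioi (0:ℝ), ENNReal.ofReal (F (c - x))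
      = ∫⁻ t in Ioo (0:ℝ) 1, ENNReal.ofReal (c - H t) := by
  have hmeas : Measurable (fun t => if t ∈ Ioo (0:ℝ) 1 then H t else 0) := Ht_meas hHsm hFdef
  set A : Set (ℝ × ℝ) :=
    {q | q.2 ∈ Ioo (0:ℝ) 1 ∧ (if q.2 ∈ Ioo (0:ℝ) 1 then H q.2 else 0) + q.1 ≤ c} with hA
  have hAmeas : MeasurableSet A := by
    have : A = (Prod.snd ⁻¹' Ioo (0:ℝ) 1) ∩
        {q : ℝ × ℝ | (if q.2 ∈ Ioo (0:ℝ) 1 then H q.2 else 0) + q.1 ≤ c} := rfl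
    rw [this]
    exact (measurableSet_Ioo.preimage measurable_snd).inter
      (measurableSet_le ((hmeas.comp measurable_snd).add measurable_fst) measurable_const)
  have sect1 : ∀ x : ℝ, {t | (x, t) ∈ A} = {t | t ∈ Ioo (0:ℝ) 1 ∧ H t ≤ c - x} := by
    intro x; ext t
    simp only [hA, mem_setOf_eq]
    constructor
    · rintro ⟨h1, h2⟩; rw [if_pos h1] at h2; exact ⟨h1, by linarith⟩
    · rintro ⟨h1, h2⟩; rw [if_pos h1]; exact ⟨h1, by linarith⟩
  calc ∫⁻ x in Ioi (0:ℝ), ENNReal.ofReal (F (c - x))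
      = ∫⁻ x in Ioi (0:ℝ), volume {t | (x, t) ∈ A} := by
        refine lintegral_congr fun x => ?_
        rw [sect1 x, vol_le_eq hHsm hFdef]
    _ = ∫⁻ x in Ioi (0:ℝ), ∫⁻ t, A.indicator (fun _ => (1:ℝ≥0∞)) (x, t) := by
        refine lintegral_congr fun x => ?_
        have hsec : MeasurableSet {t | (x, t) ∈ A} := measurable_prodMk_left hAmeas
        rw [← lintegral_indicator_one hsec]
        refine lintegral_congr fun t => ?_
        by_cases h : (x, t) ∈ A <;> simp [Set.indicator_apply, h]
    _ = ∫⁻ t, ∫⁻ x in Ioi (0:ℝ), A.indicator (fun _ => (1:ℝ≥0∞)) (x, t) := by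
        apply lintegral_lintegral_swap
        have : Function.uncurry (fun x t => A.indicator (fun _ => (1:ℝ≥0∞)) (x, t))
            = A.indicator (fun _ => 1) := by
          ext p; simp [Function.uncurry]
        rw [this]
        exact (measurable_one.indicator hAmeas).aemeasurable
    _ = ∫⁻ t, (volume.restrict (Ioi 0)) {x | (x, t) ∈ A} := by
        refine lintegral_congr fun t => ?_
        have hsec : MeasurableSet {x | (x, t) ∈ A} :=
          hAmeas.preimage (measurable_id.prodMk measurable_const)
        rw [← lintegral_indicator_one hsec]
        refine lintegral_congr fun x => ?_
        by_cases h : (x, t) ∈ A <;> simp [Set.indicator_apply, h]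
    _ = ∫⁻ t, (Ioo (0:ℝ) 1).indicator (fun t => ENNReal.ofReal (c - H t)) t := by
        refine lintegral_congr fun t => ?_
        by_cases ht : t ∈ Ioo (0:ℝ) 1
        · have hxt : {x | (x, t) ∈ A} = Iic (c - H t) := by
            ext x
            simp only [hA, mem_setOf_eq, mem_Iic, ht, if_true, true_and]
            constructor <;> intro <;> linarith
          rw [hxt, Measure.restrict_apply measurableSet_Iic]
          rw [show Iic (c - H t) ∩ Ioi (0:ℝ) = Ioc 0 (c - H t) by
            ext x; simp only [mem_inter_iff, mem_Iic, mem_Ioi, mem_Ioc]; tauto]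
          rw [Real.volume_Ioc, indicator_of_mem ht, sub_zero]
        · have hxt : {x | (x, t) ∈ A} = ∅ := by
            ext x; simp only [hA, mem_setOf_eq, mem_empty_iff_false, iff_false]
            rintro ⟨h1, _⟩; exact ht h1
          rw [hxt, measure_empty, indicator_of_notMem ht]
    _ = ∫⁻ t in Ioo (0:ℝ) 1, ENNReal.ofReal (c - H t) := by
        rw [lintegral_indicator measurableSet_Ioo]

lemma tonelli_T2 (c : ℝ) :
    ∫⁻ x in Ioi (0:ℝ), ENNReal.ofReal (1 - F (c + x))
      = ∫⁻ t in Ioo (0:ℝ) 1, ENNReal.ofReal (H t - c) := by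
  have hmeas : Measurable (fun t => if t ∈ Ioo (0:ℝ) 1 then H t else 0) := Ht_meas hHsm hFdef
  set A : Set (ℝ × ℝ) :=
    {q | q.2 ∈ Ioo (0:ℝ) 1 ∧ c + q.1 ≤ (if q.2 ∈ Ioo (0:ℝ) 1 then H q.2 else 0)} with hA
  have hAmeas : MeasurableSet A := by
    have : A = (Prod.snd ⁻¹' Ioo (0:ℝ) 1) ∩
        {q : ℝ × ℝ | c + q.1 ≤ (if q.2 ∈ Ioo (0:ℝ) 1 then H q.2 else 0)} := rfl
    rw [this]
    exact (measurableSet_Ioo.preimage measurable_snd).inter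
      (measurableSet_le (measurable_const.add measurable_fst) (hmeas.comp measurable_snd))
  have sect1 : ∀ x : ℝ, {t | (x, t) ∈ A} = {t | t ∈ Ioo (0:ℝ) 1 ∧ (c + x) ≤ H t} := by
    intro x; ext t
    simp only [hA, mem_setOf_eq]
    constructor
    · rintro ⟨h1, h2⟩; rw [if_pos h1] at h2; exact ⟨h1, h2⟩
    · rintro ⟨h1, h2⟩; rw [if_pos h1]; exact ⟨h1, h2⟩
  calc ∫⁻ x in Ioi (0:ℝ), ENNReal.ofReal (1 - F (c + x))
      = ∫⁻ x in Ioi (0:ℝ), volume {t | (x, t) ∈ A} := by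
        refine lintegral_congr fun x => ?_
        rw [sect1 x, vol_ge_eq hHsm hFdef]
    _ = ∫⁻ x in Ioi (0:ℝ), ∫⁻ t, A.indicator (fun _ => (1:ℝ≥0∞)) (x, t) := by
        refine lintegral_congr fun x => ?_
        have hsec : MeasurableSet {t | (x, t) ∈ A} := measurable_prodMk_left hAmeas
        rw [← lintegral_indicator_one hsec]
        refine lintegral_congr fun t => ?_
        by_cases h : (x, t) ∈ A <;> simp [Set.indicator_apply, h]
    _ = ∫⁻ t, ∫⁻ x in Ioi (0:ℝ), A.indicator (fun _ => (1:ℝ≥0∞)) (x, t) := by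
        apply lintegral_lintegral_swap
        have : Function.uncurry (fun x t => A.indicator (fun _ => (1:ℝ≥0∞)) (x, t))
            = A.indicator (fun _ => 1) := by
          ext p; simp [Function.uncurry]
        rw [this]
        exact (measurable_one.indicator hAmeas).aemeasurable
    _ = ∫⁻ t, (volume.restrict (Ioi 0)) {x | (x, t) ∈ A} := by
        refine lintegral_congr fun t => ?_
        have hsec : MeasurableSet {x | (x, t) ∈ A} :=
          hAmeas.preimage (measurable_id.prodMk measurable_const)
        rw [← lintegral_indicator_one hsec]
        refine lintegral_congr fun x => ?_
        by_cases h : (x, t) ∈ A <;> simp [Set.indicator_apply, h]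
    _ = ∫⁻ t, (Ioo (0:ℝ) 1).indicator (fun t => ENNReal.ofReal (H t - c)) t := by
        refine lintegral_congr fun t => ?_
        by_cases ht : t ∈ Ioo (0:ℝ) 1
        · have hxt : {x | (x, t) ∈ A} = Iic (H t - c) := by
            ext x
            simp only [hA, mem_setOf_eq, mem_Iic, ht, if_true, true_and]
            constructor <;> intro <;> linarith
          rw [hxt, Measure.restrict_apply measurableSet_Iic]
          rw [show Iic (H t - c) ∩ Ioi (0:ℝ) = Ioc 0 (H t - c) by
            ext x; simp only [mem_inter_iff, mem_Iic, mem_Ioi, mem_Ioc]; tauto]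
          rw [Real.volume_Ioc, indicator_of_mem ht, sub_zero]
        · have hxt : {x | (x, t) ∈ A} = ∅ := by
            ext x; simp only [hA, mem_setOf_eq, mem_empty_iff_false, iff_false]
            rintro ⟨h1, _⟩; exact ht h1
          rw [hxt, measure_empty, indicator_of_notMem ht]
    _ = ∫⁻ t in Ioo (0:ℝ) 1, ENNReal.ofReal (H t - c) := by
        rw [lintegral_indicator measurableSet_Ioo]

end Tonelli

section Moments

variable {H F : ℝ → ℝ}
variable (hHsm : StrictMonoOn H (Ioo (0:ℝ) 1))
    (hFdef : ∀ x, F x = sSup {t | t ∈ Ioo (0:ℝ) 1 ∧ H t ≤ x})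
    (hHint : IntegrableOn H (Ioo (0:ℝ) 1))

lemma ofReal_max_zero (b : ℝ) : ENNReal.ofReal (max b 0) = ENNReal.ofReal b := by
  rcases le_total b 0 with h | h
  · rw [max_eq_right h, ENNReal.ofReal_zero, eq_comm, ENNReal.ofReal_eq_zero]; exact h
  · rw [max_eq_left h]

lemma lint_ofReal_lt_top {μ : Measure ℝ} {f : ℝ → ℝ} (hf : Integrable f μ) :
    ∫⁻ t, ENNReal.ofReal (f t) ∂μ < ⊤ := by
  refine lt_of_le_of_lt (lintegral_mono fun t => ?_) hf.2
  calc ENNReal.ofReal (f t) ≤ ENNReal.ofReal |f t| := ENNReal.ofReal_le_ofReal (le_abs_self _)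
    _ = (‖f t‖₊ : ℝ≥0∞) := (Real.enorm_eq_ofReal_abs _).symm

include hHsm hFdef in
lemma aemeasH : AEMeasurable H (volume.restrict (Ioo (0:ℝ) 1)) := by
  refine ((Ht_meas hHsm hFdef).aemeasurable).congr ?_
  filter_upwards [ae_restrict_mem measurableSet_Ioo] with t ht
  exact if_pos ht

variable {K : ℕ} (k : Fin K) (Q : Measure (Fin K → ℝ)) (hQP : IsProbabilityMeasure Q)
    (hQm : ∀ s, Q {z | z k ≤ s} = ENNReal.ofReal (1 - F (-s)))

include hHsm hFdef hQP hQm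

lemma lint_coord_pos (a : ℝ) :
    ∫⁻ z, ENNReal.ofReal (z k - a) ∂Q = ∫⁻ t in Ioo (0:ℝ) 1, ENNReal.ofReal (-a - H t) := by
  have hmeas : Measurable fun z : Fin K → ℝ => z k - a :=
    (measurable_pi_apply k).sub measurable_const
  have h0 : ∫⁻ z, ENNReal.ofReal (z k - a) ∂Q
      = ∫⁻ z, ENNReal.ofReal (max (z k - a) 0) ∂Q :=
    (lintegral_congr fun z => (ofReal_max_zero _).symm)
  have hlc := lintegral_eq_lintegral_meas_lt (f := fun z : Fin K → ℝ => max (z k - a) 0) Q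
    (ae_of_all _ fun z => le_max_right _ _) ((hmeas.max measurable_const).aemeasurable)
  rw [h0, hlc]
  have hx : ∀ x ∈ Ioi (0:ℝ), Q {z | x < max (z k - a) 0} = ENNReal.ofReal (F (-a - x)) := by
    intro x hx
    rw [mem_Ioi] at hx
    have hset : {z : Fin K → ℝ | x < max (z k - a) 0} = {z | z k ≤ a + x}ᶜ := by
      ext z
      simp only [mem_setOf_eq, mem_compl_iff, not_le, lt_max_iff]
      constructor
      · rintro (h | h)
        · linarith
        · linarith
      · intro h; left; linarith
    have hms : MeasurableSet {z : Fin K → ℝ | z k ≤ a + x} :=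
      measurableSet_le (measurable_pi_apply k) measurable_const
    rw [hset, prob_compl_eq_one_sub hms, hQm]
    have hb : (0:ℝ) ≤ 1 - F (-(a+x)) := by linarith [F_le_one hFdef (-(a+x))]
    rw [← ENNReal.ofReal_one, ← ENNReal.ofReal_sub _ hb]
    congr 1
    have : -(a + x) = -a - x := by ring
    rw [this]; ring
  rw [setLIntegral_congr_fun_ae measurableSet_Ioi (ae_of_all _ hx)]
  exact tonelli_T1 hHsm hFdef (-a)

lemma lint_coord_neg (a : ℝ) :
    ∫⁻ z, ENNReal.ofReal (a - z k) ∂Q = ∫⁻ t in Ioo (0:ℝ) 1, ENNReal.ofReal (H t + a) := by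
  have hmeas : Measurable fun z : Fin K → ℝ => a - z k :=
    measurable_const.sub (measurable_pi_apply k)
  have h0 : ∫⁻ z, ENNReal.ofReal (a - z k) ∂Q
      = ∫⁻ z, ENNReal.ofReal (max (a - z k) 0) ∂Q :=
    (lintegral_congr fun z => (ofReal_max_zero _).symm)
  have hlc := lintegral_eq_lintegral_meas_le (f := fun z : Fin K → ℝ => max (a - z k) 0) Q
    (ae_of_all _ fun z => le_max_right _ _) ((hmeas.max measurable_const).aemeasurable)
  rw [h0, hlc]
  have hx : ∀ x ∈ Ioi (0:ℝ), Q {z | x ≤ max (a - z k) 0} = ENNReal.ofReal (1 - F (-a + x)) := by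
    intro x hx
    rw [mem_Ioi] at hx
    have hset : {z : Fin K → ℝ | x ≤ max (a - z k) 0} = {z | z k ≤ a - x} := by
      ext z
      simp only [mem_setOf_eq, le_max_iff]
      constructor
      · rintro (h | h)
        · linarith
        · linarith
      · intro h; left; linarith
    rw [hset, hQm]
    congr 2
    ring
  rw [setLIntegral_congr_fun_ae measurableSet_Ioi (ae_of_all _ hx)]
  have := tonelli_T2 hHsm hFdef (-a)
  rw [this]
  refine lintegral_congr fun t => ?_
  congr 1
  ring

include hHint in
lemma pos_part_value (a : ℝ) :
    Integrable (fun z => max (z k - a) 0) Q ∧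
    ∫ z, max (z k - a) 0 ∂Q = ∫ t in Ioo (0:ℝ) 1, max (-a - H t) 0 := by
  have hIc : Integrable (fun t => -a - H t) (volume.restrict (Ioo (0:ℝ) 1)) :=
    (integrable_const (-a)).sub hHint
  have hfin : ∫⁻ t in Ioo (0:ℝ) 1, ENNReal.ofReal (-a - H t) < ⊤ := lint_ofReal_lt_top hIc
  have hmeas : Measurable fun z : Fin K → ℝ => max (z k - a) 0 :=
    ((measurable_pi_apply k).sub measurable_const).max measurable_const
  have hofreal : ∫⁻ z, ENNReal.ofReal (max (z k - a) 0) ∂Q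
      = ∫⁻ t in Ioo (0:ℝ) 1, ENNReal.ofReal (-a - H t) := by
    rw [← lint_coord_pos hHsm hFdef k Q hQP hQm a]
    exact lintegral_congr fun z => ofReal_max_zero _
  constructor
  · refine ⟨hmeas.aestronglyMeasurable, ?_⟩
    rw [hasFiniteIntegral_iff_ofReal (f := fun z : Fin K → ℝ => max (z k - a) 0)
      (ae_of_all _ fun z => le_max_right _ _), hofreal]
    exact hfin
  · have he1 := integral_eq_lintegral_of_nonneg_ae (f := fun z : Fin K → ℝ => max (z k - a) 0)
      (μ := Q) (ae_of_all _ fun z => le_max_right _ _) hmeas.aestronglyMeasurable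
    rw [he1, hofreal]
    have hmeasH : AEMeasurable (fun t => max (-a - H t) 0) (volume.restrict (Ioo (0:ℝ) 1)) :=
      (aemeasurable_const.sub (aemeasH hHsm hFdef)).max aemeasurable_const
    have he2 := integral_eq_lintegral_of_nonneg_ae (f := fun t : ℝ => max (-a - H t) 0)
      (μ := volume.restrict (Ioo (0:ℝ) 1)) (ae_of_all _ fun t => le_max_right _ _)
      hmeasH.aestronglyMeasurable
    rw [he2]
    congr 1
    exact (lintegral_congr fun t => (ofReal_max_zero _).symm)

include hHint in
lemma coord_integrable : Integrable (fun z => z k) Q := by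
  have hmeas : Measurable fun z : Fin K → ℝ => z k := measurable_pi_apply k
  refine ⟨hmeas.aestronglyMeasurable, ?_⟩
  have hpos := lint_coord_pos hHsm hFdef k Q hQP hQm 0
  have hneg := lint_coord_neg hHsm hFdef k Q hQP hQm 0
  simp only [sub_zero, zero_sub, add_zero, neg_zero] at hpos hneg
  have hb : ∀ z : Fin K → ℝ, (‖z k‖₊ : ℝ≥0∞)
      ≤ ENNReal.ofReal (z k) + ENNReal.ofReal (-z k) := by
    intro z
    rw [← enorm_eq_nnnorm, Real.enorm_eq_ofReal_abs]
    rcases le_total 0 (z k) with h | h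
    · rw [abs_of_nonneg h]; exact le_add_right le_rfl
    · rw [abs_of_nonpos h]; exact le_add_left le_rfl
  have hHneg : Integrable (fun t => -H t) (volume.restrict (Ioo (0:ℝ) 1)) := hHint.neg
  calc ∫⁻ z, (‖z k‖₊ : ℝ≥0∞) ∂Q
      ≤ ∫⁻ z, (ENNReal.ofReal (z k) + ENNReal.ofReal (-z k)) ∂Q := lintegral_mono hb
    _ = ∫⁻ z, ENNReal.ofReal (z k) ∂Q + ∫⁻ z, ENNReal.ofReal (-z k) ∂Q :=
        lintegral_add_left (hmeas.ennreal_ofReal) _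
    _ < ⊤ := by
        rw [hpos, hneg]
        exact ENNReal.add_lt_top.mpr ⟨lint_ofReal_lt_top hHneg, lint_ofReal_lt_top hHint⟩

include hHint in
lemma coord_integral : ∫ z, z k ∂Q = - ∫ t in Ioo (0:ℝ) 1, H t := by
  have hInt := coord_integrable hHsm hFdef hHint k Q hQP hQm
  have hpos := lint_coord_pos hHsm hFdef k Q hQP hQm 0
  have hneg := lint_coord_neg hHsm hFdef k Q hQP hQm 0
  simp only [sub_zero, zero_sub, add_zero, neg_zero] at hpos hneg
  rw [integral_eq_lintegral_pos_part_sub_lintegral_neg_part hInt, hpos, hneg]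
  have hmeasH : AEMeasurable H (volume.restrict (Ioo (0:ℝ) 1)) := aemeasH hHsm hFdef
  have h1 : (∫⁻ t in Ioo (0:ℝ) 1, ENNReal.ofReal (-H t)).toReal
      = ∫ t in Ioo (0:ℝ) 1, max (-H t) 0 := by
    have he := integral_eq_lintegral_of_nonneg_ae (f := fun t : ℝ => max (-H t) 0)
      (μ := volume.restrict (Ioo (0:ℝ) 1)) (ae_of_all _ fun t => le_max_right _ _)
      (hmeasH.neg.max aemeasurable_const).aestronglyMeasurable
    rw [he]
    congr 1
    exact (lintegral_congr fun t => (ofReal_max_zero _).symm)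
  have h2 : (∫⁻ t in Ioo (0:ℝ) 1, ENNReal.ofReal (H t)).toReal
      = ∫ t in Ioo (0:ℝ) 1, max (H t) 0 := by
    have he := integral_eq_lintegral_of_nonneg_ae (f := fun t : ℝ => max (H t) 0)
      (μ := volume.restrict (Ioo (0:ℝ) 1)) (ae_of_all _ fun t => le_max_right _ _)
      (hmeasH.max aemeasurable_const).aestronglyMeasurable
    rw [he]
    congr 1
    exact (lintegral_congr fun t => (ofReal_max_zero _).symm)
  rw [h1, h2]
  have hisub : Integrable (fun t => max (-H t) 0) (volume.restrict (Ioo (0:ℝ) 1)) :=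
    hHint.neg.pos_part
  have hisub2 : Integrable (fun t => max (H t) 0) (volume.restrict (Ioo (0:ℝ) 1)) :=
    hHint.pos_part
  rw [← integral_sub hisub hisub2, ← integral_neg]
  refine integral_congr_ae (ae_of_all _ fun t => ?_)
  show max (-H t) 0 - max (H t) 0 = -H t
  rcases le_total (H t) 0 with h | h
  · rw [max_eq_left (by linarith : (0:ℝ) ≤ -H t), max_eq_right h]; ring
  · rw [max_eq_right (by linarith : -H t ≤ (0:ℝ)), max_eq_left h]; ring

end Moments

section UpperBound

variable {H F : ℝ → ℝ}
variable (hHsm : StrictMonoOn H (Ioo (0:ℝ) 1))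
    (hFdef : ∀ x, F x = sSup {t | t ∈ Ioo (0:ℝ) 1 ∧ H t ≤ x})
    (hHint : IntegrableOn H (Ioo (0:ℝ) 1))

include hHsm hFdef hHint

lemma upperQ {K : ℕ} (hK : 1 ≤ K) (u : Fin K → ℝ) (v : ℝ) (Q : Measure (Fin K → ℝ))
    (hQP : IsProbabilityMeasure Q)
    (hQm : ∀ (k : Fin K) (s : ℝ), Q {z | z k ≤ s} = ENNReal.ofReal (1 - F (-s))) :
    Integrable (fun z => ⨆ k, u k + z k) Q ∧
    ∫ z, (⨆ k, u k + z k) ∂Q ≤ v + ∑ k, ∫ t in Ioo (0:ℝ) 1, max (u k - v - H t) 0 := by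
  have hKne : Nonempty (Fin K) := ⟨⟨0, hK⟩⟩
  set k₀ : Fin K := ⟨0, hK⟩ with hk₀
  have hpp : ∀ k : Fin K, Integrable (fun z => max (u k + z k - v) 0) Q ∧
      ∫ z, max (u k + z k - v) 0 ∂Q = ∫ t in Ioo (0:ℝ) 1, max (u k - v - H t) 0 := by
    intro k
    obtain ⟨hint, hval⟩ := pos_part_value hHsm hFdef hHint k Q hQP (hQm k) (v - u k)
    constructor
    · exact hint.congr (ae_of_all _ fun z =>
        show max (z k - (v - u k)) 0 = max (u k + z k - v) 0 by congr 1; ring)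
    · calc ∫ z, max (u k + z k - v) 0 ∂Q = ∫ z, max (z k - (v - u k)) 0 ∂Q := by
            refine integral_congr_ae (ae_of_all _ fun z => ?_)
            show max (u k + z k - v) 0 = max (z k - (v - u k)) 0
            congr 1; ring
        _ = ∫ t in Ioo (0:ℝ) 1, max (-(v - u k) - H t) 0 := hval
        _ = ∫ t in Ioo (0:ℝ) 1, max (u k - v - H t) 0 := by
            refine integral_congr_ae (ae_of_all _ fun t => ?_)
            show max (-(v - u k) - H t) 0 = max (u k - v - H t) 0
            congr 1; ring
  have hsum_int : Integrable (fun z => ∑ k, max (u k + z k - v) 0) Q :=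
    integrable_finset_sum _ fun k _ => (hpp k).1
  have hk0_int : Integrable (fun z => u k₀ + z k₀) Q :=
    (integrable_const _).add (coord_integrable hHsm hFdef hHint k₀ Q hQP (hQm k₀))
  have hmeasf : Measurable (fun z : Fin K → ℝ => ⨆ k, u k + z k) :=
    Measurable.iSup fun k => measurable_const.add (measurable_pi_apply k)
  have hub : ∀ z : Fin K → ℝ, (⨆ k, u k + z k) ≤ v + ∑ k, max (u k + z k - v) 0 := by
    intro z
    refine ciSup_le fun k => ?_
    have h1 : u k + z k - v ≤ max (u k + z k - v) 0 := le_max_left _ _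
    have h2 : max (u k + z k - v) 0 ≤ ∑ j, max (u j + z j - v) 0 :=
      Finset.single_le_sum (f := fun j : Fin K => max (u j + z j - v) 0)
        (fun j _ => le_max_right _ _) (Finset.mem_univ k)
    linarith
  have hlb : ∀ z : Fin K → ℝ, u k₀ + z k₀ ≤ ⨆ k, u k + z k := fun z =>
    le_ciSup (f := fun k : Fin K => u k + z k)
      (Set.Finite.bddAbove (Set.finite_range _)) k₀
  have hsumnn : ∀ z : Fin K → ℝ, 0 ≤ ∑ k, max (u k + z k - v) 0 := fun z =>
    Finset.sum_nonneg fun j _ => le_max_right _ _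
  have hfint : Integrable (fun z => ⨆ k, u k + z k) Q := by
    refine Integrable.mono' (((integrable_const |v|).add hsum_int).add hk0_int.abs)
      hmeasf.aestronglyMeasurable (ae_of_all _ fun z => ?_)
    rw [Real.norm_eq_abs, abs_le]
    constructor
    · simp only [Pi.add_apply]
      have := hlb z
      have := neg_abs_le (u k₀ + z k₀)
      have := hsumnn z
      have := abs_nonneg v
      linarith
    · simp only [Pi.add_apply]
      have := hub z
      have := le_abs_self v
      have := abs_nonneg (u k₀ + z k₀)
      linarith
  refine ⟨hfint, ?_⟩
  calc ∫ z, (⨆ k, u k + z k) ∂Q ≤ ∫ z, (v + ∑ k, max (u k + z k - v) 0) ∂Q :=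
        integral_mono hfint ((integrable_const v).add hsum_int) hub
    _ = v + ∑ k, ∫ z, max (u k + z k - v) 0 ∂Q := by
        rw [integral_add (integrable_const v) hsum_int, integral_const,
          integral_finset_sum _ (fun k _ => (hpp k).1)]
        simp [measure_univ]
    _ = v + ∑ k, ∫ t in Ioo (0:ℝ) 1, max (u k - v - H t) 0 := by
        congr 1
        exact Finset.sum_congr rfl fun k _ => (hpp k).2

lemma iota_val (c : ℝ) :
    ∫ t in Ioo (0:ℝ) 1, max (c - H t) 0 = c * F c - ∫ t in Ioo (0:ℝ) (F c), H t := by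
  have h0 : 0 ≤ F c := F_nonneg hFdef c
  have h1 : F c ≤ 1 := F_le_one hFdef c
  have hsplit : (Ioo (0:ℝ) 1 : Set ℝ) =ᵐ[volume] (Ioo 0 (F c) ∪ Ioo (F c) 1 : Set ℝ) := by
    rw [MeasureTheory.ae_eq_set]
    constructor
    · refine measure_mono_null (?_ : _ ⊆ ({F c} : Set ℝ)) (measure_singleton _)
      intro t ht
      obtain ⟨htI, hnot⟩ := ht
      by_contra hne
      rcases lt_or_gt_of_ne hne with h | h
      · exact hnot (Or.inl ⟨htI.1, h⟩)
      · exact hnot (Or.inr ⟨h, htI.2⟩)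
    · have : (Ioo (0:ℝ) (F c) ∪ Ioo (F c) 1) \ Ioo (0:ℝ) 1 = ∅ :=
        diff_eq_empty.mpr (union_subset (Ioo_subset_Ioo le_rfl h1) (Ioo_subset_Ioo h0 le_rfl))
      rw [this]; exact measure_empty
  rw [setIntegral_congr_set hsplit]
  have hdisj : Disjoint (Ioo (0:ℝ) (F c)) (Ioo (F c) 1) := by
    rw [Set.disjoint_left]
    intro t h1' h2'
    exact absurd h1'.2 (not_lt.mpr h2'.1.le)
  have hintmax : IntegrableOn (fun t => max (c - H t) 0) (Ioo (0:ℝ) 1) volume :=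
    ((integrable_const c).sub hHint).pos_part
  rw [setIntegral_union hdisj measurableSet_Ioo
    (hintmax.mono_set (Ioo_subset_Ioo le_rfl h1)) (hintmax.mono_set (Ioo_subset_Ioo h0 le_rfl))]
  have hz : ∫ t in Ioo (F c) 1, max (c - H t) 0 = 0 := by
    have heq : EqOn (fun t => max (c - H t) 0) (fun _ => (0:ℝ)) (Ioo (F c) 1) := by
      intro t ht
      have htI : t ∈ Ioo (0:ℝ) 1 := ⟨lt_of_le_of_lt h0 ht.1, ht.2⟩
      have := F_lt_imp hHsm hFdef htI ht.1
      show max (c - H t) 0 = (0:ℝ)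
      rw [max_eq_right (by linarith)]
    rw [setIntegral_congr_fun measurableSet_Ioo heq, integral_zero]
  have hmain : ∫ t in Ioo (0:ℝ) (F c), max (c - H t) 0 = ∫ t in Ioo (0:ℝ) (F c), (c - H t) := by
    refine setIntegral_congr_fun measurableSet_Ioo fun t ht => ?_
    have htI : t ∈ Ioo (0:ℝ) 1 := ⟨ht.1, lt_of_lt_of_le ht.2 h1⟩
    have := lt_F_imp hHsm hFdef htI ht.2
    show max (c - H t) 0 = c - H t
    rw [max_eq_left (by linarith)]
  rw [hz, add_zero, hmain,
    integral_sub (integrableOn_const (C := c) (s := Ioo 0 (F c)) (μ := volume) measure_Ioo_lt_top.ne)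
      (hHint.mono_set (Ioo_subset_Ioo le_rfl h1)),
    setIntegral_const, Real.volume_real_Ioo_of_le h0, sub_zero, smul_eq_mul]
  ring

lemma convex_gap (c q : ℝ) (hq : q ∈ Icc (0:ℝ) 1) :
    (q - F c) * c ≤ (∫ t in Ioo (0:ℝ) q, H t) - ∫ t in Ioo (0:ℝ) (F c), H t := by
  have h0 : 0 ≤ F c := F_nonneg hFdef c
  have h1 : F c ≤ 1 := F_le_one hFdef c
  rcases le_total (F c) q with hpq | hqp
  · have hsplit : (Ioo (0:ℝ) q : Set ℝ) =ᵐ[volume] (Ioo 0 (F c) ∪ Ioo (F c) q : Set ℝ) := by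
      rw [MeasureTheory.ae_eq_set]
      constructor
      · refine measure_mono_null (?_ : _ ⊆ ({F c} : Set ℝ)) (measure_singleton _)
        intro t ht
        obtain ⟨htI, hnot⟩ := ht
        by_contra hne
        rcases lt_or_gt_of_ne hne with h | h
        · exact hnot (Or.inl ⟨htI.1, h⟩)
        · exact hnot (Or.inr ⟨h, htI.2⟩)
      · have : (Ioo (0:ℝ) (F c) ∪ Ioo (F c) q) \ Ioo (0:ℝ) q = ∅ :=
          diff_eq_empty.mpr (union_subset (Ioo_subset_Ioo le_rfl hpq) (Ioo_subset_Ioo h0 le_rfl))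
        rw [this]; exact measure_empty
    have hdisj : Disjoint (Ioo (0:ℝ) (F c)) (Ioo (F c) q) := by
      rw [Set.disjoint_left]
      intro t h1' h2'
      exact absurd h1'.2 (not_lt.mpr h2'.1.le)
    have hIq : Ioo (0:ℝ) q ⊆ Ioo (0:ℝ) 1 := Ioo_subset_Ioo le_rfl hq.2
    have heq : ∫ t in Ioo (0:ℝ) q, H t
        = (∫ t in Ioo (0:ℝ) (F c), H t) + ∫ t in Ioo (F c) q, H t := by
      rw [setIntegral_congr_set hsplit,
        setIntegral_union hdisj measurableSet_Ioo
          (hHint.mono_set (Ioo_subset_Ioo le_rfl h1))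
          (hHint.mono_set (Ioo_subset_Ioo h0 hq.2))]
    rw [heq]
    have hlow : (q - F c) * c ≤ ∫ t in Ioo (F c) q, H t := by
      have hc : ∫ _ in Ioo (F c) q, (c:ℝ) ≤ ∫ t in Ioo (F c) q, H t := by
        refine setIntegral_mono_on (integrableOn_const measure_Ioo_lt_top.ne enorm_ne_top)
          (hHint.mono_set (Ioo_subset_Ioo h0 hq.2)) measurableSet_Ioo fun t ht => ?_
        exact (F_lt_imp hHsm hFdef ⟨lt_of_le_of_lt h0 ht.1, lt_of_lt_of_le ht.2 hq.2⟩ ht.1).le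
      calc (q - F c) * c = (volume (Ioo (F c) q)).toReal • c := by
            rw [Real.volume_Ioo, ENNReal.toReal_ofReal (by linarith), smul_eq_mul]
        _ = ∫ _ in Ioo (F c) q, (c:ℝ) := (setIntegral_const c).symm
        _ ≤ _ := hc
    linarith
  · have hsplit : (Ioo (0:ℝ) (F c) : Set ℝ) =ᵐ[volume] (Ioo 0 q ∪ Ioo q (F c) : Set ℝ) := by
      rw [MeasureTheory.ae_eq_set]
      constructor
      · refine measure_mono_null (?_ : _ ⊆ ({q} : Set ℝ)) (measure_singleton _)
        intro t ht
        obtain ⟨htI, hnot⟩ := ht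
        by_contra hne
        rcases lt_or_gt_of_ne hne with h | h
        · exact hnot (Or.inl ⟨htI.1, h⟩)
        · exact hnot (Or.inr ⟨h, htI.2⟩)
      · have : (Ioo (0:ℝ) q ∪ Ioo q (F c)) \ Ioo (0:ℝ) (F c) = ∅ :=
          diff_eq_empty.mpr (union_subset (Ioo_subset_Ioo le_rfl hqp) (Ioo_subset_Ioo hq.1 le_rfl))
        rw [this]; exact measure_empty
    have hdisj : Disjoint (Ioo (0:ℝ) q) (Ioo q (F c)) := by
      rw [Set.disjoint_left]
      intro t h1' h2'
      exact absurd h1'.2 (not_lt.mpr h2'.1.le)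
    have heq : ∫ t in Ioo (0:ℝ) (F c), H t
        = (∫ t in Ioo (0:ℝ) q, H t) + ∫ t in Ioo q (F c), H t := by
      rw [setIntegral_congr_set hsplit,
        setIntegral_union hdisj measurableSet_Ioo
          (hHint.mono_set (Ioo_subset_Ioo le_rfl hq.2))
          (hHint.mono_set (Ioo_subset_Ioo hq.1 h1))]
    rw [heq]
    have hupp : ∫ t in Ioo q (F c), H t ≤ (F c - q) * c := by
      have hc : ∫ t in Ioo q (F c), H t ≤ ∫ _ in Ioo q (F c), (c:ℝ) := by
        refine setIntegral_mono_on (hHint.mono_set (Ioo_subset_Ioo hq.1 h1))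
          (integrableOn_const measure_Ioo_lt_top.ne enorm_ne_top) measurableSet_Ioo fun t ht => ?_
        exact (lt_F_imp hHsm hFdef ⟨lt_of_le_of_lt hq.1 ht.1, lt_of_lt_of_le ht.2 h1⟩ ht.2).le
      calc ∫ t in Ioo q (F c), H t ≤ ∫ _ in Ioo q (F c), (c:ℝ) := hc
        _ = (volume (Ioo q (F c))).toReal • c := setIntegral_const c
        _ = (F c - q) * c := by
            rw [Real.volume_Ioo, ENNReal.toReal_ofReal (by linarith), smul_eq_mul]
    linarith
end UpperBound

section Coupling

variable {K : ℕ}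

noncomputable def PPf (p : Fin K → ℝ) : ℕ → ℝ :=
  fun n => ∑ j ∈ Finset.range n, (if h : j < K then p ⟨j, h⟩ else 0)

noncomputable def piK (p : Fin K → ℝ) (k : Fin K) (t : ℝ) : ℝ :=
  if t ≤ PPf p k then t
  else if t ≤ PPf p ((k:ℕ)+1) then t + 1 - PPf p ((k:ℕ)+1) else t - p k

noncomputable def Tcoup (H : ℝ → ℝ) (p : Fin K → ℝ) (t : ℝ) (k : Fin K) : ℝ :=
  -(if (1 - piK p k t) ∈ Ioo (0:ℝ) 1 then H (1 - piK p k t) else 0)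

variable {p : Fin K → ℝ}

lemma PPf_zero (p : Fin K → ℝ) : PPf p 0 = 0 := Finset.sum_range_zero _

lemma PPf_succ (p : Fin K → ℝ) (k : Fin K) : PPf p ((k:ℕ)+1) = PPf p k + p k := by
  unfold PPf
  rw [Finset.sum_range_succ, dif_pos k.isLt]

lemma PPf_nonneg (hp0 : ∀ k, 0 ≤ p k) (n : ℕ) : 0 ≤ PPf p n :=
  Finset.sum_nonneg fun j _ => by
    by_cases h : j < K
    · rw [dif_pos h]; exact hp0 _
    · rw [dif_neg h]

lemma PPf_mono (hp0 : ∀ k, 0 ≤ p k) : Monotone (PPf p) := fun m n h =>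
  Finset.sum_le_sum_of_subset_of_nonneg (Finset.range_subset_range.mpr h) fun j _ _ => by
    by_cases hj : j < K
    · rw [dif_pos hj]; exact hp0 _
    · rw [dif_neg hj]

lemma PPf_K (hp1 : ∑ k, p k = 1) : PPf p K = 1 := by
  unfold PPf
  rw [← Fin.sum_univ_eq_sum_range (fun j => if h : j < K then p ⟨j, h⟩ else 0) K]
  rw [← hp1]
  exact Finset.sum_congr rfl fun k _ => by simp [k.isLt]

lemma PPf_le_one (hp0 : ∀ k, 0 ≤ p k) (hp1 : ∑ k, p k = 1) {n : ℕ} (hn : n ≤ K) :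
    PPf p n ≤ 1 := PPf_K hp1 ▸ PPf_mono hp0 hn

lemma piK_measurable (p : Fin K → ℝ) (k : Fin K) : Measurable (piK p k) := by
  unfold piK
  refine Measurable.ite ?_ measurable_id (Measurable.ite ?_ ?_ ?_)
  · exact measurableSet_Iic
  · exact measurableSet_Iic
  · exact (measurable_id.add_const 1).sub_const _
  · exact measurable_id.sub_const _

lemma Tcoup_measurable {H : ℝ → ℝ}
    (hHt : Measurable (fun w => if w ∈ Ioo (0:ℝ) 1 then H w else 0)) (k : Fin K) :
    Measurable (fun t => Tcoup H p t k) :=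
  (hHt.comp (measurable_const.sub (piK_measurable p k))).neg

lemma map_add_restrict_Ioc (c A B : ℝ) :
    Measure.map (fun t => t + c) (volume.restrict (Ioc A B))
      = volume.restrict (Ioc (A+c) (B+c)) := by
  have he : MeasurableEmbedding (fun t : ℝ => t + c) :=
    (Homeomorph.addRight c).measurableEmbedding
  have h1 := he.restrict_map volume (Ioc (A+c) (B+c))
  rw [(measurePreserving_add_right volume c).map_eq] at h1
  have h2 : (fun t : ℝ => t + c) ⁻¹' Ioc (A+c) (B+c) = Ioc A B := by
    ext x
    simp only [mem_preimage, mem_Ioc]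
    constructor <;> intro h <;> exact ⟨by linarith [h.1], by linarith [h.2]⟩
  rw [h2] at h1
  exact h1.symm

lemma piK_map (hp0 : ∀ k, 0 ≤ p k) (hp1 : ∑ k, p k = 1) (k : Fin K) :
    Measure.map (piK p k) (volume.restrict (Ioo (0:ℝ) 1))
      = volume.restrict (Ioo (0:ℝ) 1) := by
  have hab : PPf p (k:ℕ) ≤ PPf p ((k:ℕ)+1) := PPf_mono hp0 (Nat.le_succ _)
  have h0a : (0:ℝ) ≤ PPf p (k:ℕ) := PPf_nonneg hp0 _
  have hb1 : PPf p ((k:ℕ)+1) ≤ 1 := PPf_le_one hp0 hp1 k.isLt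
  have hba : PPf p ((k:ℕ)+1) = PPf p (k:ℕ) + p k := PPf_succ p k
  have hpk1 : p k ≤ 1 := by
    have h := Finset.single_le_sum (f := p) (fun j _ => hp0 j) (Finset.mem_univ k)
    rw [hp1] at h; exact h
  have hmeask : Measurable (piK p k) := piK_measurable p k
  have hdec : volume.restrict (Ioo (0:ℝ) 1)
      = volume.restrict (Ioc 0 (PPf p (k:ℕ))) + volume.restrict (Ioc (PPf p (k:ℕ)) (PPf p ((k:ℕ)+1)))
        + volume.restrict (Ioc (PPf p ((k:ℕ)+1)) 1) := by
    rw [Measure.restrict_congr_set Ioo_ae_eq_Ioc]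
    rw [← Set.Ioc_union_Ioc_eq_Ioc (h0a.trans hab) hb1]
    rw [← Set.Ioc_union_Ioc_eq_Ioc h0a hab]
    rw [Measure.restrict_union
      (by rw [Set.Ioc_union_Ioc_eq_Ioc h0a hab]; exact (Set.Ioc_disjoint_Ioc_of_le le_rfl))
      measurableSet_Ioc]
    rw [Measure.restrict_union (Set.Ioc_disjoint_Ioc_of_le le_rfl) measurableSet_Ioc]
  rw [hdec, Measure.map_add _ _ hmeask, Measure.map_add _ _ hmeask]
  have hm1 : Measure.map (piK p k) (volume.restrict (Ioc 0 (PPf p (k:ℕ))))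
      = volume.restrict (Ioc 0 (PPf p (k:ℕ))) := by
    have hcong : piK p k =ᵐ[volume.restrict (Ioc 0 (PPf p (k:ℕ)))] id := by
      rw [Filter.EventuallyEq, ae_restrict_iff' measurableSet_Ioc]
      refine ae_of_all _ fun t ht => ?_
      show piK p k t = t
      unfold piK
      rw [if_pos (show t ≤ PPf p (k:ℕ) from ht.2)]
    rw [Measure.map_congr hcong, Measure.map_id]
  have hm2 : Measure.map (piK p k) (volume.restrict (Ioc (PPf p (k:ℕ)) (PPf p ((k:ℕ)+1))))
      = volume.restrict (Ioc (1 - p k) 1) := by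
    have hcong : piK p k =ᵐ[volume.restrict (Ioc (PPf p (k:ℕ)) (PPf p ((k:ℕ)+1)))]
        (fun t => t + (1 - PPf p ((k:ℕ)+1))) := by
      rw [Filter.EventuallyEq, ae_restrict_iff' measurableSet_Ioc]
      refine ae_of_all _ fun t ht => ?_
      show piK p k t = t + (1 - PPf p ((k:ℕ)+1))
      unfold piK
      rw [if_neg (not_le.mpr (show PPf p (k:ℕ) < t from ht.1)),
        if_pos (show t ≤ PPf p ((k:ℕ)+1) from ht.2)]
      ring
    rw [Measure.map_congr hcong, map_add_restrict_Ioc (1 - PPf p ((k:ℕ)+1)) _ _]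
    rw [show PPf p (k:ℕ) + (1 - PPf p ((k:ℕ)+1)) = 1 - p k by rw [hba]; ring,
      show PPf p ((k:ℕ)+1) + (1 - PPf p ((k:ℕ)+1)) = (1:ℝ) by ring]
  have hm3 : Measure.map (piK p k) (volume.restrict (Ioc (PPf p ((k:ℕ)+1)) 1))
      = volume.restrict (Ioc (PPf p (k:ℕ)) (1 - p k)) := by
    have hcong : piK p k =ᵐ[volume.restrict (Ioc (PPf p ((k:ℕ)+1)) 1)]
        (fun t => t + (-p k)) := by
      rw [Filter.EventuallyEq, ae_restrict_iff' measurableSet_Ioc]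
      refine ae_of_all _ fun t ht => ?_
      show piK p k t = t + (-p k)
      unfold piK
      rw [if_neg (not_le.mpr (show PPf p (k:ℕ) < t from lt_of_le_of_lt hab ht.1)),
        if_neg (not_le.mpr (show PPf p ((k:ℕ)+1) < t from ht.1))]
      ring
    rw [Measure.map_congr hcong, map_add_restrict_Ioc (-p k) _ _]
    rw [show PPf p ((k:ℕ)+1) + -p k = PPf p (k:ℕ) by rw [hba]; ring,
      show (1:ℝ) + -p k = 1 - p k by ring]
  rw [hm1, hm2, hm3]
  have hax : PPf p (k:ℕ) ≤ 1 - p k := by linarith [hba, hb1]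
  have h1p : 1 - p k ≤ 1 := by linarith [hp0 k]
  rw [add_right_comm]
  rw [← Measure.restrict_union (Set.Ioc_disjoint_Ioc_of_le le_rfl) measurableSet_Ioc,
    Set.Ioc_union_Ioc_eq_Ioc h0a hax,
    ← Measure.restrict_union (Set.Ioc_disjoint_Ioc_of_le le_rfl) measurableSet_Ioc,
    Set.Ioc_union_Ioc_eq_Ioc (h0a.trans hax) h1p,
    ← Measure.restrict_congr_set Ioo_ae_eq_Ioc]
  exact hdec

variable {H F : ℝ → ℝ}

lemma coup_marginal (hHsm : StrictMonoOn H (Ioo (0:ℝ) 1))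
    (hFdef : ∀ x, F x = sSup {t | t ∈ Ioo (0:ℝ) 1 ∧ H t ≤ x})
    (hp0 : ∀ k, 0 ≤ p k) (hp1 : ∑ k, p k = 1) (k : Fin K) (s : ℝ) :
    Measure.map (fun t (j : Fin K) => Tcoup H p t j) (volume.restrict (Ioo (0:ℝ) 1))
      {z | z k ≤ s} = ENNReal.ofReal (1 - F (-s)) := by
  have hHt := Ht_meas hHsm hFdef
  have hTm : Measurable (fun t (j : Fin K) => Tcoup H p t j) :=
    measurable_pi_lambda _ fun j => Tcoup_measurable hHt j
  have hsetm : MeasurableSet {z : Fin K → ℝ | z k ≤ s} :=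
    measurableSet_le (measurable_pi_apply k) measurable_const
  rw [Measure.map_apply hTm hsetm]
  set B : Set ℝ := {r | -(if (1 - r) ∈ Ioo (0:ℝ) 1 then H (1 - r) else 0) ≤ s} with hB
  have hBm : MeasurableSet B :=
    ((hHt.comp (measurable_const.sub measurable_id)).neg) measurableSet_Iic
  have hpre : (fun t (j : Fin K) => Tcoup H p t j) ⁻¹' {z | z k ≤ s} = (piK p k) ⁻¹' B := rfl
  rw [hpre, ← Measure.map_apply (piK_measurable p k) hBm, piK_map hp0 hp1 k,
    Measure.restrict_apply hBm]
  apply le_antisymm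
  · have hsub : B ∩ Ioo (0:ℝ) 1 ⊆ Ioc 0 (1 - F (-s)) := by
      intro r hr
      refine ⟨hr.2.1, ?_⟩
      by_contra hgt
      push_neg at hgt
      have hw : (1 - r) ∈ Ioo (0:ℝ) 1 := ⟨by linarith [hr.2.2], by linarith [hr.2.1]⟩
      have hlt : 1 - r < F (-s) := by linarith
      have hHlt := lt_F_imp hHsm hFdef hw hlt
      have hBr := hr.1
      simp only [hB, mem_setOf_eq, if_pos hw] at hBr
      linarith
    calc volume (B ∩ Ioo 0 1) ≤ volume (Ioc 0 (1 - F (-s))) := measure_mono hsub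
      _ = ENNReal.ofReal (1 - F (-s)) := by rw [Real.volume_Ioc, sub_zero]
  · have hsub : Ioo (0:ℝ) (1 - F (-s)) ⊆ B ∩ Ioo 0 1 := by
      intro r hr
      have hF0 : 0 ≤ F (-s) := F_nonneg hFdef _
      have hF1 : F (-s) ≤ 1 := F_le_one hFdef _
      have hr1 : r < 1 := lt_of_lt_of_le hr.2 (by linarith)
      have hw : (1 - r) ∈ Ioo (0:ℝ) 1 := ⟨by linarith, by linarith [hr.1]⟩
      have hgt : F (-s) < 1 - r := by linarith [hr.2]
      have hHgt := F_lt_imp hHsm hFdef hw hgt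
      refine ⟨?_, hr.1, hr1⟩
      simp only [hB, mem_setOf_eq, if_pos hw]
      linarith
    calc ENNReal.ofReal (1 - F (-s)) = volume (Ioo (0:ℝ) (1 - F (-s))) := by
          rw [Real.volume_Ioo, sub_zero]
      _ ≤ volume (B ∩ Ioo 0 1) := measure_mono hsub

lemma coup_integral (hK : 1 ≤ K) (hHsm : StrictMonoOn H (Ioo (0:ℝ) 1))
    (hFdef : ∀ x, F x = sSup {t | t ∈ Ioo (0:ℝ) 1 ∧ H t ≤ x})
    (hHint : IntegrableOn H (Ioo (0:ℝ) 1))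
    (hp0 : ∀ k, 0 ≤ p k) (hp1 : ∑ k, p k = 1) (u : Fin K → ℝ)
    (hslab : ∀ (k : Fin K), ∀ t ∈ Ioo (PPf p k) (PPf p ((k:ℕ)+1)), ∀ j : Fin K,
      u j + Tcoup H p t j ≤ u k + Tcoup H p t k) :
    ∫ z, (⨆ j, u j + z j) ∂(Measure.map (fun t (j : Fin K) => Tcoup H p t j)
        (volume.restrict (Ioo (0:ℝ) 1)))
      = ∑ k, (u k * p k - ∫ t in Ioo (0:ℝ) (p k), H t) := by
  haveI : Nonempty (Fin K) := ⟨⟨0, hK⟩⟩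
  have hHt := Ht_meas hHsm hFdef
  have hTm : Measurable (fun t (j : Fin K) => Tcoup H p t j) :=
    measurable_pi_lambda _ fun j => Tcoup_measurable hHt j
  have hfm : Measurable (fun z : Fin K → ℝ => ⨆ j, u j + z j) :=
    Measurable.iSup fun j => measurable_const.add (measurable_pi_apply j)
  rw [integral_map hTm.aemeasurable hfm.aestronglyMeasurable]
  set f : ℝ → ℝ := fun t => ⨆ j, u j + Tcoup H p t j with hf
  have hpk1 : ∀ k, p k ≤ 1 := by
    intro k
    have h := Finset.single_le_sum (f := p) (fun j _ => hp0 j) (Finset.mem_univ k)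
    rw [hp1] at h; exact h
  have hslab_eq : ∀ (k : Fin K), ∀ t ∈ Ioo (PPf p k) (PPf p ((k:ℕ)+1)),
      f t = u k - (if (PPf p ((k:ℕ)+1) - t) ∈ Ioo (0:ℝ) 1
        then H (PPf p ((k:ℕ)+1) - t) else 0) := by
    intro k t ht
    have h1 : f t = u k + Tcoup H p t k := by
      apply le_antisymm
      · exact ciSup_le fun j => hslab k t ht j
      · exact le_ciSup (f := fun j : Fin K => u j + Tcoup H p t j)
          (Set.Finite.bddAbove (Set.finite_range _)) k
    rw [h1]
    have hpik : piK p k t = t + 1 - PPf p ((k:ℕ)+1) := by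
      unfold piK
      rw [if_neg (not_le.mpr ht.1), if_pos ht.2.le]
    unfold Tcoup
    rw [hpik, show 1 - (t + 1 - PPf p ((k:ℕ)+1)) = PPf p ((k:ℕ)+1) - t by ring]
    ring
  have hHtInt : Integrable (fun w => if w ∈ Ioo (0:ℝ) 1 then H w else 0) volume := by
    have hi : (fun w => if w ∈ Ioo (0:ℝ) 1 then H w else 0) = (Ioo (0:ℝ) 1).indicator H := by
      funext w; rw [Set.indicator_apply]
    rw [hi, integrable_indicator_iff measurableSet_Ioo]
    exact hHint
  have hcomp_int : ∀ (c : ℝ),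
      Integrable (fun t => (if (c - t) ∈ Ioo (0:ℝ) 1 then H (c - t) else 0)) volume := by
    intro c
    have hmp : MeasurePreserving (fun t : ℝ => c - t) volume volume :=
      Measure.measurePreserving_sub_left volume c
    exact (hmp.integrable_comp hHtInt.aestronglyMeasurable).mpr hHtInt
  have hpiece : ∀ (k : Fin K), ∫ t in (PPf p k)..(PPf p ((k:ℕ)+1)), f t
      = u k * p k - ∫ t in Ioo (0:ℝ) (p k), H t := by
    intro k
    have hab : PPf p k ≤ PPf p ((k:ℕ)+1) := PPf_mono hp0 (Nat.le_succ _)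
    have hba : PPf p ((k:ℕ)+1) = PPf p k + p k := PPf_succ p k
    have hfae : f =ᵐ[volume.restrict (Ioo (PPf p k) (PPf p ((k:ℕ)+1)))]
        fun t => u k - (if (PPf p ((k:ℕ)+1) - t) ∈ Ioo (0:ℝ) 1
          then H (PPf p ((k:ℕ)+1) - t) else 0) := by
      rw [Filter.EventuallyEq, ae_restrict_iff' measurableSet_Ioo]
      exact ae_of_all _ fun t ht => hslab_eq k t ht
    rw [intervalIntegral.integral_of_le hab, integral_Ioc_eq_integral_Ioo,
      integral_congr_ae hfae]
    have hint1 : IntegrableOn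
        (fun t => (if (PPf p ((k:ℕ)+1) - t) ∈ Ioo (0:ℝ) 1 then H (PPf p ((k:ℕ)+1) - t) else 0))
        (Ioo (PPf p k) (PPf p ((k:ℕ)+1))) volume := (hcomp_int _).integrableOn
    rw [integral_sub (integrableOn_const (C := u k) (s := Ioo (PPf p k) (PPf p ((k:ℕ)+1))) (μ := volume) measure_Ioo_lt_top.ne) hint1]
    rw [setIntegral_const, Real.volume_real_Ioo_of_le (by linarith), smul_eq_mul]
    have h2 : ∫ t in Ioo (PPf p k) (PPf p ((k:ℕ)+1)),
        (if (PPf p ((k:ℕ)+1) - t) ∈ Ioo (0:ℝ) 1 then H (PPf p ((k:ℕ)+1) - t) else 0)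
        = ∫ t in Ioo (0:ℝ) (p k), H t := by
      rw [← integral_Ioc_eq_integral_Ioo, ← intervalIntegral.integral_of_le hab]
      rw [intervalIntegral.integral_comp_sub_left
        (fun w => if w ∈ Ioo (0:ℝ) 1 then H w else 0) (PPf p ((k:ℕ)+1))]
      rw [show PPf p ((k:ℕ)+1) - PPf p ((k:ℕ)+1) = (0:ℝ) by ring,
        show PPf p ((k:ℕ)+1) - PPf p k = p k by rw [hba]; ring]
      rw [intervalIntegral.integral_of_le (hp0 k), integral_Ioc_eq_integral_Ioo]
      refine setIntegral_congr_fun measurableSet_Ioo fun w hw => ?_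
      have hw1 : w ∈ Ioo (0:ℝ) 1 := ⟨hw.1, lt_of_lt_of_le hw.2 (hpk1 k)⟩
      rw [if_pos hw1]
    rw [h2]
    have hpp : PPf p ((k:ℕ)+1) - PPf p k = p k := by rw [hba]; ring
    rw [hpp, mul_comm]
  have hint_f : ∀ i : ℕ, i < K → IntervalIntegrable f volume (PPf p i) (PPf p (i+1)) := by
    intro i hi
    have hab : PPf p i ≤ PPf p (i+1) := PPf_mono hp0 (Nat.le_succ _)
    rw [intervalIntegrable_iff_integrableOn_Ioc_of_le hab]
    rw [IntegrableOn, Measure.restrict_congr_set (Ioo_ae_eq_Ioc).symm]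
    have hfae : f =ᵐ[volume.restrict (Ioo (PPf p i) (PPf p (i+1)))]
        fun t => u ⟨i, hi⟩ - (if (PPf p (i+1) - t) ∈ Ioo (0:ℝ) 1
          then H (PPf p (i+1) - t) else 0) := by
      rw [Filter.EventuallyEq, ae_restrict_iff' measurableSet_Ioo]
      exact ae_of_all _ fun t ht => hslab_eq ⟨i, hi⟩ t ht
    exact (((integrable_const (u ⟨i, hi⟩)).sub ((hcomp_int _).integrableOn)).congr hfae.symm)
  calc ∫ t in Ioo (0:ℝ) 1, f t = ∫ t in (0:ℝ)..(1:ℝ), f t := by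
        rw [intervalIntegral.integral_of_le zero_le_one, integral_Ioc_eq_integral_Ioo]
    _ = ∫ t in (PPf p 0)..(PPf p K), f t := by rw [PPf_zero, PPf_K hp1]
    _ = ∑ i ∈ Finset.range K, ∫ t in (PPf p i)..(PPf p (i+1)), f t :=
        (intervalIntegral.sum_integral_adjacent_intervals hint_f).symm
    _ = ∑ i ∈ Finset.range K, (if h : i < K
          then (u ⟨i,h⟩ * p ⟨i,h⟩ - ∫ t in Ioo (0:ℝ) (p ⟨i,h⟩), H t) else 0) := by
        refine Finset.sum_congr rfl fun i hi => ?_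
        rw [dif_pos (Finset.mem_range.mp hi)]
        exact hpiece ⟨i, Finset.mem_range.mp hi⟩
    _ = ∑ k : Fin K, (u k * p k - ∫ t in Ioo (0:ℝ) (p k), H t) := by
        rw [← Fin.sum_univ_eq_sum_range (fun i => if h : i < K
          then (u ⟨i,h⟩ * p ⟨i,h⟩ - ∫ t in Ioo (0:ℝ) (p ⟨i,h⟩), H t) else 0) K]
        exact Finset.sum_congr rfl fun k _ => by simp [k.isLt]

end Coupling
end Frechet
theorem stmt12 (K : ℕ) (hK : 1 ≤ K) (G₁ G₂ : ℝ → ℝ)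
    -- `G₁` and `G₂` are marginal generators:
    (hG₁mono : StrictMono G₁) (hG₁diff : Differentiable ℝ G₁)
    (hG₁bot : ∀ ε > (0:ℝ), ∃ s, G₁ s < ε) (hG₁top : ∀ ε > (0:ℝ), ∃ s, 1 - ε < G₁ s)
    (hG₁int : IntegrableOn (quantile G₁) (Ioo (0:ℝ) 1))
    (hG₁zero : ∫ t in (0:ℝ)..1, quantile G₁ t = 0)
    (hG₂mono : StrictMono G₂) (hG₂diff : Differentiable ℝ G₂)
    (hG₂bot : ∀ ε > (0:ℝ), ∃ s, G₂ s < ε) (hG₂top : ∀ ε > (0:ℝ), ∃ s, 1 - ε < G₂ s)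
    (hG₂int : IntegrableOn (quantile G₂) (Ioo (0:ℝ) 1))
    (hG₂zero : ∫ t in (0:ℝ)..1, quantile G₂ t = 0)
    (γ₁ γ₂ : ℝ) (hγ₁ : 0 < γ₁) (hγ₂ : 0 < γ₂)
    -- `H = γ₁ G₁⁻¹ + γ₂ G₂⁻¹` and its generalized inverse `F`:
    (H : ℝ → ℝ) (hH : ∀ t, H t = γ₁ * quantile G₁ t + γ₂ * quantile G₂ t)
    (F : ℝ → ℝ) (hF : ∀ x, F x = sSup {t | t ∈ Ioo (0:ℝ) 1 ∧ H t ≤ x})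
    -- the marginal CDFs of the induced ambiguity set:
    (Fk : Fin K → ℝ → ℝ) (hFk : ∀ k s, Fk k s = min 1 (max 0 (1 - F (-s))))
    -- the two regularizer pieces:
    (g₁ g₂ : ℝ → ℝ)
    (hg₁ : ∀ s ∈ Icc (0:ℝ) 1, g₁ s = ∫ t in (0:ℝ)..s, quantile G₁ t)
    (hg₂ : ∀ s ∈ Icc (0:ℝ) 1, g₂ s = ∫ t in (0:ℝ)..s, quantile G₂ t) :
    StrictMonoOn H (Ioo (0:ℝ) 1) ∧
    ∀ u : Fin K → ℝ, ∃ p, p ∈ simplex K ∧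
      IsMaxOn (fun q => ∑ k, u k * q k - ∑ k, (γ₁ * g₁ (q k) + γ₂ * g₂ (q k)))
        (simplex K) p ∧
      Phi Fk u = ∑ k, u k * p k - ∑ k, (γ₁ * g₁ (p k) + γ₂ * g₂ (p k)) := by
  classical
  have hc₁ : Continuous G₁ := hG₁diff.continuous
  have hc₂ : Continuous G₂ := hG₂diff.continuous
  have hq₁sm := Frechet.quantile_strictMonoOn hG₁mono hc₁ hG₁bot hG₁top
  have hq₂sm := Frechet.quantile_strictMonoOn hG₂mono hc₂ hG₂bot hG₂top
  have hHsm : StrictMonoOn H (Ioo (0:ℝ) 1) := by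
    intro x hx y hy hxy
    rw [hH x, hH y]
    have h1 := hq₁sm hx hy hxy
    have h2 := hq₂sm hx hy hxy
    have h3 := mul_lt_mul_of_pos_left h1 hγ₁
    have h4 := mul_lt_mul_of_pos_left h2 hγ₂
    linarith
  refine ⟨hHsm, ?_⟩
  have hFdef : ∀ x, F x = sSup {t | t ∈ Ioo (0:ℝ) 1 ∧ H t ≤ x} := hF
  have hHint : IntegrableOn H (Ioo (0:ℝ) 1) := by
    have h1 : IntegrableOn (fun t => γ₁ * quantile G₁ t + γ₂ * quantile G₂ t)
        (Ioo (0:ℝ) 1) volume := (hG₁int.const_mul γ₁).add (hG₂int.const_mul γ₂)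
    exact h1.congr_fun (fun t _ => (hH t).symm) measurableSet_Ioo
  have hIii : ∀ (f : ℝ → ℝ), IntegrableOn f (Ioo (0:ℝ) 1) volume → ∀ {s : ℝ},
      s ∈ Icc (0:ℝ) 1 → IntervalIntegrable f volume 0 s := by
    intro f hf s hs
    rw [intervalIntegrable_iff_integrableOn_Ioc_of_le hs.1, IntegrableOn,
      Measure.restrict_congr_set (Ioo_ae_eq_Ioc).symm]
    exact hf.mono_set (Ioo_subset_Ioo le_rfl hs.2)
  have hGg : ∀ s ∈ Icc (0:ℝ) 1, γ₁ * g₁ s + γ₂ * g₂ s = ∫ t in Ioo (0:ℝ) s, H t := by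
    intro s hs
    rw [hg₁ s hs, hg₂ s hs, ← intervalIntegral.integral_const_mul,
      ← intervalIntegral.integral_const_mul,
      ← intervalIntegral.integral_add ((hIii _ hG₁int hs).const_mul γ₁)
        ((hIii _ hG₂int hs).const_mul γ₂),
      intervalIntegral.integral_of_le hs.1, integral_Ioc_eq_integral_Ioo]
    exact setIntegral_congr_fun measurableSet_Ioo fun t _ => (hH t).symm
  have h01 : (1:ℝ) ∈ Icc (0:ℝ) 1 := ⟨zero_le_one, le_rfl⟩
  have eg1 : g₁ 1 = 0 := by rw [hg₁ 1 h01]; exact hG₁zero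
  have eg2 : g₂ 1 = 0 := by rw [hg₂ 1 h01]; exact hG₂zero
  have hHzero : ∫ t in Ioo (0:ℝ) 1, H t = 0 := by
    have h := hGg 1 h01
    rw [eg1, eg2] at h
    rw [← h]; ring
  have hFk' : ∀ (k : Fin K) (s : ℝ), ENNReal.ofReal (Fk k s) = ENNReal.ofReal (1 - F (-s)) := by
    intro k s
    rw [hFk k s]
    congr 1
    rw [max_eq_right (by linarith [Frechet.F_le_one hFdef (-s)]),
      min_eq_right (by linarith [Frechet.F_nonneg hFdef (-s)])]
  have hqIcc : ∀ q ∈ simplex K, ∀ k, q k ∈ Icc (0:ℝ) 1 := by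
    intro q hq k
    refine ⟨hq.1 k, ?_⟩
    have h := Finset.single_le_sum (f := q) (fun j _ => hq.1 j) (Finset.mem_univ k)
    rw [hq.2] at h; exact h
  intro u
  haveI : IsProbabilityMeasure (volume.restrict (Ioo (0:ℝ) 1)) :=
    ⟨by rw [Measure.restrict_apply_univ, Real.volume_Ioo]; norm_num⟩
  by_cases hK1 : K = 1
  · -- K = 1
    subst hK1
    refine ⟨fun _ => 1, ⟨fun _ => zero_le_one, by simp⟩, ?_, ?_⟩
    · rw [isMaxOn_iff]
      intro q hq
      have hq1 : q = fun _ => (1:ℝ) := by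
        funext j
        have h := hq.2
        rw [Fin.sum_univ_one] at h
        have hj : j = 0 := Subsingleton.elim j 0
        rw [hj]; exact h
      rw [hq1]
    · -- value
      have hval : ∀ x, (∃ Q ∈ marginalSet Fk, x = ∫ z, (⨆ k, u k + z k) ∂Q) → x = u 0 := by
        rintro x ⟨Q, hQ, rfl⟩
        haveI := hQ.1
        have hQm : ∀ (k : Fin 1) (s : ℝ), Q {z | z k ≤ s} = ENNReal.ofReal (1 - F (-s)) := by
          intro k s; rw [hQ.2 k s]; exact hFk' k s
        have hsup : (fun z : Fin 1 → ℝ => ⨆ k, u k + z k) = fun z => u 0 + z 0 := by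
          funext z
          exact ciSup_unique
        rw [hsup, integral_add (integrable_const _)
          (Frechet.coord_integrable hHsm hFdef hHint 0 Q hQ.1 (hQm 0)),
          integral_const, Frechet.coord_integral hHsm hFdef hHint 0 Q hQ.1 (hQm 0),
          hHzero, probReal_univ]
        simp
      -- nonemptiness via the coupling
      have hp0 : ∀ k : Fin 1, 0 ≤ (fun _ => (1:ℝ)) k := fun _ => zero_le_one
      have hp1 : ∑ k : Fin 1, (fun _ => (1:ℝ)) k = 1 := by simp
      have hHt := Frechet.Ht_meas hHsm hFdef
      have hTm : Measurable (fun t (j : Fin 1) => Frechet.Tcoup H (fun _ => (1:ℝ)) t j) :=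
        measurable_pi_lambda _ fun j => Frechet.Tcoup_measurable hHt j
      set Q₀ : Measure (Fin 1 → ℝ) :=
        Measure.map (fun t (j : Fin 1) => Frechet.Tcoup H (fun _ => (1:ℝ)) t j)
          (volume.restrict (Ioo (0:ℝ) 1)) with hQ₀def
      haveI hQ₀P : IsProbabilityMeasure Q₀ := Measure.isProbabilityMeasure_map hTm.aemeasurable
      have hQ₀mem : Q₀ ∈ marginalSet Fk := by
        refine ⟨hQ₀P, fun k s => ?_⟩
        rw [hFk' k s, hQ₀def]
        exact Frechet.coup_marginal hHsm hFdef hp0 hp1 k s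
      have hne : ∃ x, x ∈ {x | ∃ Q ∈ marginalSet Fk, x = ∫ z, (⨆ k, u k + z k) ∂Q} :=
        ⟨_, Q₀, hQ₀mem, rfl⟩
      have hsingle : {x | ∃ Q ∈ marginalSet Fk, x = ∫ z, (⨆ k, u k + z k) ∂Q} = {u 0} := by
        apply Set.eq_singleton_iff_nonempty_unique_mem.mpr
        exact ⟨hne, fun x hx => hval x hx⟩
      have hPhi : Phi Fk u = sSup {x | ∃ Q ∈ marginalSet Fk, x = ∫ z, (⨆ k, u k + z k) ∂Q} := rfl
      rw [hPhi, hsingle, csSup_singleton]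
      rw [Fin.sum_univ_one, Fin.sum_univ_one, eg1, eg2]
      ring
  · -- K ≥ 2
    have hK2 : 2 ≤ K := by omega
    haveI : Nonempty (Fin K) := ⟨⟨0, hK⟩⟩
    have hFc := Frechet.F_cont hHsm hFdef
    have hψc : Continuous (fun v => ∑ k, F (u k - v)) :=
      continuous_finset_sum _ fun k _ => hFc.comp (continuous_const.sub continuous_id)
    have hKR : (2:ℝ) ≤ (K:ℝ) := by exact_mod_cast hK2
    obtain ⟨vA, hvA⟩ : ∃ a, 1 ≤ ∑ k, F (u k - a) := by
      refine ⟨Finset.univ.inf' Finset.univ_nonempty u - H (3/4), ?_⟩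
      have hterm : ∀ k : Fin K,
          (3/4 : ℝ) ≤ F (u k - (Finset.univ.inf' Finset.univ_nonempty u - H (3/4))) := by
        intro k
        apply Frechet.le_F hFdef (by norm_num : (3/4:ℝ) ∈ Ioo (0:ℝ) 1)
        have h := Finset.inf'_le u (Finset.mem_univ k)
        linarith
      calc (1:ℝ) ≤ (K:ℝ) * (3/4) := by nlinarith
        _ = ∑ _k : Fin K, (3/4:ℝ) := by
            rw [Finset.sum_const, Finset.card_univ, Fintype.card_fin, nsmul_eq_mul]
        _ ≤ _ := Finset.sum_le_sum fun k _ => hterm k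
    obtain ⟨vB, hvB⟩ : ∃ b, ∑ k, F (u k - b) ≤ 1 := by
      have hKpos : (0:ℝ) < (K:ℝ) := by linarith
      have ht₁ : (1/(2*(K:ℝ))) ∈ Ioo (0:ℝ) 1 := by
        constructor
        · positivity
        · rw [div_lt_one (by positivity)]; linarith
      refine ⟨Finset.univ.sup' Finset.univ_nonempty u - H (1/(2*(K:ℝ))), ?_⟩
      have hterm : ∀ k : Fin K,
          F (u k - (Finset.univ.sup' Finset.univ_nonempty u - H (1/(2*(K:ℝ)))))
            ≤ 1/(2*(K:ℝ)) := by
        intro k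
        by_contra hgt
        push_neg at hgt
        have h1 := Frechet.lt_F_imp hHsm hFdef ht₁ hgt
        have h2 := Finset.le_sup' u (Finset.mem_univ k)
        linarith
      calc ∑ k, F (u k - (Finset.univ.sup' Finset.univ_nonempty u - H (1/(2*(K:ℝ)))))
          ≤ ∑ _k : Fin K, (1/(2*(K:ℝ))) := Finset.sum_le_sum fun k _ => hterm k
        _ = (K:ℝ) * (1/(2*(K:ℝ))) := by
            rw [Finset.sum_const, Finset.card_univ, Fintype.card_fin, nsmul_eq_mul]
        _ ≤ 1 := by
            rw [mul_one_div, div_le_one (by positivity)]; linarith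
    obtain ⟨v, -, hv⟩ : ∃ v ∈ uIcc vB vA, ∑ k, F (u k - v) = 1 := by
      have hmem : (1:ℝ) ∈ uIcc (∑ k, F (u k - vB)) (∑ k, F (u k - vA)) :=
        mem_uIcc.mpr (Or.inl ⟨hvB, hvA⟩)
      obtain ⟨v, hv1, hv2⟩ := intermediate_value_uIcc (hψc.continuousOn) hmem
      exact ⟨v, hv1, hv2⟩
    have hp0 : ∀ k : Fin K, 0 ≤ F (u k - v) := fun k => Frechet.F_nonneg hFdef _
    have hp1 : ∑ k : Fin K, F (u k - v) = 1 := hv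
    have hpIcc : ∀ k : Fin K, F (u k - v) ∈ Icc (0:ℝ) 1 :=
      fun k => ⟨hp0 k, Frechet.F_le_one hFdef _⟩
    refine ⟨fun k => F (u k - v), ⟨hp0, hp1⟩, ?_, ?_⟩
    · -- IsMaxOn
      rw [isMaxOn_iff]
      intro q hq
      have hgap : ∀ k : Fin K, (q k - F (u k - v)) * (u k - v)
          ≤ (γ₁ * g₁ (q k) + γ₂ * g₂ (q k))
            - (γ₁ * g₁ (F (u k - v)) + γ₂ * g₂ (F (u k - v))) := by
        intro k
        have h1 := Frechet.convex_gap hHsm hFdef hHint (u k - v) (q k) (hqIcc q hq k)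
        rw [← hGg (q k) (hqIcc q hq k), ← hGg (F (u k - v)) (hpIcc k)] at h1
        linarith
      have hsum := Finset.sum_le_sum fun k (_ : k ∈ Finset.univ) => hgap k
      have e1 : ∑ k, (q k - F (u k - v)) * (u k - v)
          = (∑ k, u k * q k) - ∑ k, u k * F (u k - v) := by
        have hterm : ∀ k : Fin K, (q k - F (u k - v)) * (u k - v)
            = (u k * q k - u k * F (u k - v)) - (v * q k - v * F (u k - v)) :=
          fun k => by ring
        rw [Finset.sum_congr rfl fun k _ => hterm k, Finset.sum_sub_distrib,
          Finset.sum_sub_distrib, Finset.sum_sub_distrib, ← Finset.mul_sum, ← Finset.mul_sum,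
          hq.2, hp1]
        ring
      have e2 : ∑ k, ((γ₁ * g₁ (q k) + γ₂ * g₂ (q k))
            - (γ₁ * g₁ (F (u k - v)) + γ₂ * g₂ (F (u k - v))))
          = (∑ k, (γ₁ * g₁ (q k) + γ₂ * g₂ (q k)))
            - ∑ k, (γ₁ * g₁ (F (u k - v)) + γ₂ * g₂ (F (u k - v))) :=
        Finset.sum_sub_distrib _ _
      rw [e1, e2] at hsum
      simp only
      linarith
    · -- Phi value
      have hslab : ∀ (k : Fin K), ∀ t ∈ Ioo (Frechet.PPf (fun k => F (u k - v)) k)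
          (Frechet.PPf (fun k => F (u k - v)) ((k:ℕ)+1)), ∀ j : Fin K,
          u j + Frechet.Tcoup H (fun k => F (u k - v)) t j
            ≤ u k + Frechet.Tcoup H (fun k => F (u k - v)) t k := by
        intro k t ht j
        set p : Fin K → ℝ := fun k => F (u k - v) with hpdef
        have hcenter : v < u k + Frechet.Tcoup H p t k := by
          have hpik : Frechet.piK p k t = t + 1 - Frechet.PPf p ((k:ℕ)+1) := by
            unfold Frechet.piK
            rw [if_neg (not_le.mpr ht.1), if_pos ht.2.le]
          have hw : (Frechet.PPf p ((k:ℕ)+1) - t) ∈ Ioo (0:ℝ) 1 := by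
            constructor
            · linarith [ht.2]
            · have hb1 : Frechet.PPf p ((k:ℕ)+1) ≤ 1 := Frechet.PPf_le_one hp0 hp1 k.isLt
              have h0a : (0:ℝ) ≤ Frechet.PPf p (k:ℕ) := Frechet.PPf_nonneg hp0 _
              linarith [ht.1]
          have hwp : Frechet.PPf p ((k:ℕ)+1) - t < p k := by
            have hs := Frechet.PPf_succ p k
            linarith [ht.1]
          have hHw := Frechet.lt_F_imp hHsm hFdef hw hwp
          unfold Frechet.Tcoup
          rw [hpik, show 1 - (t + 1 - Frechet.PPf p ((k:ℕ)+1))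
            = Frechet.PPf p ((k:ℕ)+1) - t by ring, if_pos hw]
          linarith
        by_cases hjk : j = k
        · rw [hjk]
        · have hne : (j:ℕ) ≠ (k:ℕ) := fun h => hjk (Fin.ext h)
          have houter : u j + Frechet.Tcoup H p t j < v := by
            have ht1 : t < 1 := lt_of_lt_of_le ht.2 (Frechet.PPf_le_one hp0 hp1 k.isLt)
            have h0t : 0 < t := lt_of_le_of_lt (Frechet.PPf_nonneg hp0 _) ht.1
            rcases lt_or_gt_of_ne hne with hlt | hgt
            · -- j < k
              have h1 : Frechet.PPf p ((j:ℕ)+1) ≤ Frechet.PPf p (k:ℕ) :=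
                Frechet.PPf_mono hp0 hlt
              have h2 : Frechet.PPf p ((j:ℕ)+1) < t := lt_of_le_of_lt h1 ht.1
              have hpij : Frechet.piK p j t = t - p j := by
                unfold Frechet.piK
                rw [if_neg (not_le.mpr (lt_of_le_of_lt
                    (Frechet.PPf_mono hp0 (Nat.le_succ _)) h2)),
                  if_neg (not_le.mpr h2)]
              have hs := Frechet.PPf_succ p j
              have h0j : (0:ℝ) ≤ Frechet.PPf p (j:ℕ) := Frechet.PPf_nonneg hp0 _
              have hw : (1 - (t - p j)) ∈ Ioo (0:ℝ) 1 := by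
                constructor
                · linarith [hp0 j]
                · have h3 : p j ≤ Frechet.PPf p ((j:ℕ)+1) := by linarith
                  linarith
              have hwgt : p j < 1 - (t - p j) := by linarith
              have hHw := Frechet.F_lt_imp hHsm hFdef hw hwgt
              unfold Frechet.Tcoup
              rw [hpij, if_pos hw]
              linarith
            · -- j > k
              have h1 : Frechet.PPf p ((k:ℕ)+1) ≤ Frechet.PPf p (j:ℕ) :=
                Frechet.PPf_mono hp0 hgt
              have h2 : t < Frechet.PPf p (j:ℕ) := lt_of_lt_of_le ht.2 h1
              have hpij : Frechet.piK p j t = t := by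
                unfold Frechet.piK
                rw [if_pos h2.le]
              have hw : (1 - t) ∈ Ioo (0:ℝ) 1 := ⟨by linarith, by linarith⟩
              have hs := Frechet.PPf_succ p j
              have hle1 : Frechet.PPf p ((j:ℕ)+1) ≤ 1 := Frechet.PPf_le_one hp0 hp1 j.isLt
              have hwgt : p j < 1 - t := by linarith
              have hHw := Frechet.F_lt_imp hHsm hFdef hw hwgt
              unfold Frechet.Tcoup
              rw [hpij, if_pos hw]
              linarith
          linarith [hcenter]
      -- the coupling measure
      have hHt := Frechet.Ht_meas hHsm hFdef
      have hTm : Measurable (fun t (j : Fin K) => Frechet.Tcoup H (fun k => F (u k - v)) t j) :=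
        measurable_pi_lambda _ fun j => Frechet.Tcoup_measurable hHt j
      set Q₀ : Measure (Fin K → ℝ) :=
        Measure.map (fun t (j : Fin K) => Frechet.Tcoup H (fun k => F (u k - v)) t j)
          (volume.restrict (Ioo (0:ℝ) 1)) with hQ₀def
      haveI hQ₀P : IsProbabilityMeasure Q₀ := Measure.isProbabilityMeasure_map hTm.aemeasurable
      have hQ₀mem : Q₀ ∈ marginalSet Fk := by
        refine ⟨hQ₀P, fun k s => ?_⟩
        rw [hFk' k s, hQ₀def]
        exact Frechet.coup_marginal hHsm hFdef hp0 hp1 k s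
      have hval : ∫ z, (⨆ j, u j + z j) ∂Q₀
          = ∑ k, (u k * F (u k - v) - ∫ t in Ioo (0:ℝ) (F (u k - v)), H t) := by
        rw [hQ₀def]
        exact Frechet.coup_integral hK hHsm hFdef hHint hp0 hp1 u hslab
      have hGgp : ∀ k : Fin K, ∫ t in Ioo (0:ℝ) (F (u k - v)), H t
          = γ₁ * g₁ (F (u k - v)) + γ₂ * g₂ (F (u k - v)) := fun k => (hGg _ (hpIcc k)).symm
      have hvalJ : ∫ z, (⨆ j, u j + z j) ∂Q₀
          = ∑ k, u k * F (u k - v) - ∑ k, (γ₁ * g₁ (F (u k - v)) + γ₂ * g₂ (F (u k - v))) := by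
        rw [hval, Finset.sum_sub_distrib]
        congr 1
        exact Finset.sum_congr rfl fun k _ => by rw [hGgp k]
      -- upper bound
      have hub : ∀ x ∈ {x | ∃ Q ∈ marginalSet Fk, x = ∫ z, (⨆ k, u k + z k) ∂Q},
          x ≤ ∑ k, u k * F (u k - v)
            - ∑ k, (γ₁ * g₁ (F (u k - v)) + γ₂ * g₂ (F (u k - v))) := by
        rintro x ⟨Q, hQ, rfl⟩
        have hQm : ∀ (k : Fin K) (s : ℝ), Q {z | z k ≤ s} = ENNReal.ofReal (1 - F (-s)) := by
          intro k s; rw [hQ.2 k s]; exact hFk' k s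
        have h1 := (Frechet.upperQ hHsm hFdef hHint hK u v Q hQ.1 hQm).2
        have h2 : ∀ k : Fin K, ∫ t in Ioo (0:ℝ) 1, max (u k - v - H t) 0
            = (u k - v) * F (u k - v) - ∫ t in Ioo (0:ℝ) (F (u k - v)), H t :=
          fun k => Frechet.iota_val hHsm hFdef hHint (u k - v)
        have h3 : v + ∑ k, ((u k - v) * F (u k - v) - ∫ t in Ioo (0:ℝ) (F (u k - v)), H t)
            = ∑ k, u k * F (u k - v)
              - ∑ k, (γ₁ * g₁ (F (u k - v)) + γ₂ * g₂ (F (u k - v))) := by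
          rw [Finset.sum_sub_distrib]
          have hterm : ∀ k : Fin K, (u k - v) * F (u k - v)
              = u k * F (u k - v) - v * F (u k - v) := fun k => by ring
          rw [Finset.sum_congr rfl fun k _ => hterm k, Finset.sum_sub_distrib,
            ← Finset.mul_sum, hp1]
          rw [Finset.sum_congr rfl fun k _ => hGgp k]
          ring
        calc ∫ z, (⨆ k, u k + z k) ∂Q
            ≤ v + ∑ k, ∫ t in Ioo (0:ℝ) 1, max (u k - v - H t) 0 := h1
          _ = v + ∑ k, ((u k - v) * F (u k - v) - ∫ t in Ioo (0:ℝ) (F (u k - v)), H t) := by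
              rw [Finset.sum_congr rfl fun k _ => h2 k]
          _ = _ := h3
      have hPhi : Phi Fk u
          = sSup {x | ∃ Q ∈ marginalSet Fk, x = ∫ z, (⨆ k, u k + z k) ∂Q} := rfl
      rw [hPhi]
      apply le_antisymm
      · exact csSup_le ⟨_, ⟨Q₀, hQ₀mem, rfl⟩⟩ hub
      · rw [← hvalJ]
        exact le_csSup ⟨_, hub⟩ ⟨Q₀, hQ₀mem, rfl⟩
end

section
/- Let F : ℝ → [0,1] be a nondecreasing, L-Lipschitz continuous cumulative distribution function (i.e., lim_{s→−∞} F(s) = 0 and lim_{s→+∞} F(s) = 1). Then the map p ↦ −F^{-1}(1−p) − p/L is nondecreasing on (0,1); equivalently, for all 0 < q < p < 1 one has F^{-1}(1−q) − F^{-1}(1−p) ≥ (p − q)/L. -/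
open Set Filter

theorem stmt14 (F : ℝ → ℝ) (L : ℝ) (hL : 0 < L)
    (hmono : Monotone F)
    (h01 : ∀ s, F s ∈ Icc (0:ℝ) 1)
    (hbot : Tendsto F atBot (nhds 0))
    (htop : Tendsto F atTop (nhds 1))
    (hlip : ∀ s t : ℝ, |F s - F t| ≤ L * |s - t|) :
    MonotoneOn (fun p => -quantile F (1 - p) - p / L) (Ioo (0:ℝ) 1) ∧
    ∀ q p : ℝ, 0 < q → q < p → p < 1 →
      (p - q) / L ≤ quantile F (1 - q) - quantile F (1 - p) := by
  have key : ∀ q p : ℝ, 0 < q → q < p → p < 1 →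
      (p - q) / L ≤ quantile F (1 - q) - quantile F (1 - p) := by
    intro q p hq hqp hp1
    set Sp : Set ℝ := {t | 1 - p ≤ F t} with hSp
    set Sq : Set ℝ := {t | 1 - q ≤ F t} with hSq
    have hSp_ne : Sp.Nonempty := by
      obtain ⟨t, ht⟩ := (htop.eventually (eventually_gt_nhds (by linarith : 1 - p < 1))).exists
      exact ⟨t, le_of_lt ht⟩
    have hSq_ne : Sq.Nonempty := by
      obtain ⟨t, ht⟩ := (htop.eventually (eventually_gt_nhds (by linarith : 1 - q < 1))).exists
      exact ⟨t, le_of_lt ht⟩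
    have hSp_bdd : BddBelow Sp := by
      obtain ⟨c, hc⟩ := eventually_atBot.mp (hbot.eventually (eventually_lt_nhds (by linarith : (0:ℝ) < 1 - p)))
      refine ⟨c, fun t ht => ?_⟩
      by_contra h
      push_neg at h
      exact absurd ht (not_le.mpr (hc t h.le))
    set a := quantile F (1 - p) with ha
    set b := quantile F (1 - q) with hb
    have hab : a + (p - q) / L ≤ b := by
      refine le_of_forall_pos_le_add ?_
      intro ε hε
      have hlow : ∀ t ∈ Sq, a - ε + (p - q) / L ≤ t := by
        intro t ht
        have hnot : a - ε ∉ Sp := fun h => by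
          have := csInf_le hSp_bdd h
          rw [ha] at this
          simp only [quantile] at this
          linarith
        have hFae : F (a - ε) < 1 - p := lt_of_not_ge hnot
        have hFt : 1 - q ≤ F t := ht
        have hgt : F (a - ε) < F t := by linarith
        have htge : a - ε ≤ t := by
          by_contra h
          push_neg at h
          exact absurd (hmono h.le) (not_le.mpr hgt)
        have hl := hlip t (a - ε)
        rw [abs_of_nonneg (by linarith : (0:ℝ) ≤ F t - F (a - ε)),
            abs_of_nonneg (by linarith : (0:ℝ) ≤ t - (a - ε))] at hl
        have : p - q ≤ L * (t - (a - ε)) := by linarith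
        have := (div_le_iff₀ hL).mpr (by linarith : p - q ≤ (t - (a - ε)) * L)
        linarith
      have := le_csInf hSq_ne hlow
      have hbd : a - ε + (p - q) / L ≤ b := this
      linarith
    linarith
  constructor
  · intro q hq p hp hqp
    simp only
    rcases eq_or_lt_of_le hqp with h | h
    · subst h; exact le_refl _
    · have := key q p hq.1 h hp.2
      have h1 : quantile F (1 - p) + (p - q) / L ≤ quantile F (1 - q) := by linarith
      have : p / L - q / L = (p - q) / L := by ring
      linarith
  · exact key
end

section
/- Let K ≥ 1, L > 0, and let F_1,…,F_K : ℝ → [0,1] be nondecreasing, L-Lipschitz continuous cumulative distribution functions whose quantile functions F_k^{-1} are Lebesgue integrable on (0,1). Then the regularization function ψ(p) = −Σ_{k=1}^K ∫_{1−p_k}^1 F_k^{-1}(t) dt is convex and continuous on [0,1]^K, and moreover p ↦ ψ(p) − ‖p‖_2²/(2L) is convex on [0,1]^K; that is, ψ is strongly convex on [0,1]^K with parameter 1/L. -/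
open Set Filter MeasureTheory

/-- The regularizer `ψ(p) = −∑ₖ ∫_{1−pₖ}^1 Fₖ⁻¹(t) dt`. -/
noncomputable def reg {K : ℕ} (F : Fin K → ℝ → ℝ) (p : Fin K → ℝ) : ℝ :=
  -∑ k, ∫ t in (1 - p k)..1, quantile (F k) t

private lemma convexOn_congr' {E : Type*} [AddCommMonoid E] [Module ℝ E] {s : Set E}
    {f g : E → ℝ} (hf : ConvexOn ℝ s f) (h : ∀ x ∈ s, f x = g x) : ConvexOn ℝ s g := by
  refine ⟨hf.1, fun x hx y hy a b ha hb hab => ?_⟩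
  rw [← h _ hx, ← h _ hy, ← h _ (hf.1 hx hy ha hb hab)]
  exact hf.2 hx hy ha hb hab

/-- The primitive of a function monotone on `(0,1)` is convex on `[0,1]`. -/
private lemma primitive_convexOn (m : ℝ → ℝ) (hi : IntervalIntegrable m volume 0 1)
    (hm : ∀ ⦃u v : ℝ⦄, u ∈ Ioo (0:ℝ) 1 → v ∈ Ioo (0:ℝ) 1 → u ≤ v → m u ≤ m v) :
    ConvexOn ℝ (Icc (0:ℝ) 1) (fun x => ∫ u in (0:ℝ)..x, m u) := by
  have hIoc : IntegrableOn m (Ioc (0:ℝ) 1) volume :=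
    (intervalIntegrable_iff_integrableOn_Ioc_of_le (by norm_num)).1 hi
  apply convexOn_of_slope_mono_adjacent (convex_Icc 0 1)
  intro x y z hx hz hxy hyz
  have hx0 : (0:ℝ) ≤ x := hx.1
  have hz1 : z ≤ 1 := hz.2
  have hintxy : IntegrableOn m (Ioo x y) volume :=
    hIoc.mono_set (fun u hu => ⟨lt_of_le_of_lt hx0 hu.1, (hu.2.le.trans hyz.le).trans hz1⟩)
  have hintyz : IntegrableOn m (Ioo y z) volume :=
    hIoc.mono_set (fun u hu => ⟨lt_of_le_of_lt hx0 (hxy.trans hu.1), hu.2.le.trans hz1⟩)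
  have hmemxy : ∀ u ∈ Ioo x y, u ∈ Ioo (0:ℝ) 1 := fun u hu =>
    ⟨lt_of_le_of_lt hx0 hu.1, lt_of_lt_of_le (hu.2.trans hyz) hz1⟩
  have hmemyz : ∀ u ∈ Ioo y z, u ∈ Ioo (0:ℝ) 1 := fun u hu =>
    ⟨lt_of_le_of_lt hx0 (hxy.trans hu.1), lt_of_lt_of_le hu.2 hz1⟩
  set A : ℝ := (∫ u in Ioo y z, m u) / (z - y) with hA
  have hyx : 0 < y - x := sub_pos.2 hxy
  have hzy : 0 < z - y := sub_pos.2 hyz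
  have key1 : ∀ u ∈ Ioo x y, m u ≤ A := by
    intro u hu
    rw [hA, le_div_iff₀ hzy]
    calc m u * (z - y) = ∫ _ in Ioo y z, m u := by
          simp [Real.volume_Ioo, ENNReal.toReal_ofReal hzy.le, mul_comm, hyz.le]
      _ ≤ ∫ v in Ioo y z, m v := by
          refine setIntegral_mono_on
            (integrableOn_const measure_Ioo_lt_top.ne) hintyz measurableSet_Ioo ?_
          intro v hv
          exact hm (hmemxy u hu) (hmemyz v hv) (hu.2.le.trans hv.1.le)
  have key2 : (∫ u in Ioo x y, m u) ≤ A * (y - x) := by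
    calc (∫ u in Ioo x y, m u) ≤ ∫ _ in Ioo x y, A :=
          setIntegral_mono_on hintxy
            (integrableOn_const measure_Ioo_lt_top.ne) measurableSet_Ioo key1
      _ = A * (y - x) := by
          simp [Real.volume_Ioo, ENNReal.toReal_ofReal hyx.le, mul_comm, hxy.le]
  have isub : ∀ b : ℝ, 0 ≤ b → b ≤ 1 → IntervalIntegrable m volume 0 b := by
    intro b hb0 hb1
    exact (intervalIntegrable_iff_integrableOn_Ioc_of_le hb0).2
      (hIoc.mono_set (fun u hu => ⟨hu.1, hu.2.trans hb1⟩))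
  have hy0 : (0:ℝ) ≤ y := hx0.trans hxy.le
  have hy1 : y ≤ 1 := hyz.le.trans hz1
  have e1 : (∫ u in (0:ℝ)..y, m u) - ∫ u in (0:ℝ)..x, m u = ∫ u in Ioo x y, m u := by
    rw [intervalIntegral.integral_interval_sub_left (isub y hy0 hy1)
      (isub x hx0 hx.2), intervalIntegral.integral_of_le hxy.le,
      integral_Ioc_eq_integral_Ioo]
  have e2 : (∫ u in (0:ℝ)..z, m u) - ∫ u in (0:ℝ)..y, m u = ∫ u in Ioo y z, m u := by
    rw [intervalIntegral.integral_interval_sub_left (isub z (hy0.trans hyz.le) hz1)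
      (isub y hy0 hy1), intervalIntegral.integral_of_le hyz.le,
      integral_Ioc_eq_integral_Ioo]
  simp only [e1, e2]
  rw [div_le_div_iff₀ hyx hzy]
  have hAe : A * (z - y) = ∫ u in Ioo y z, m u := div_mul_cancel₀ _ hzy.ne'
  nlinarith [key2, hyx, hzy]

/-- Quantiles of an `L`-Lipschitz CDF grow at rate at least `1/L`. -/
private lemma quantile_gap (F : ℝ → ℝ) (L : ℝ) (hL : 0 < L)
    (hbot : Tendsto F atBot (nhds 0)) (htop : Tendsto F atTop (nhds 1))
    (hlip : ∀ s t : ℝ, |F s - F t| ≤ L * |s - t|)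
    {s t : ℝ} (hs : 0 < s) (ht : t < 1) (hst : s ≤ t) :
    quantile F s + (t - s) / L ≤ quantile F t := by
  have hne : {x | t ≤ F x}.Nonempty := by
    obtain ⟨x, hx⟩ := (htop.eventually (eventually_gt_nhds ht)).exists
    exact ⟨x, hx.le⟩
  have hbd : BddBelow {x | s ≤ F x} := by
    obtain ⟨N, hN⟩ := eventually_atBot.1 (hbot.eventually (eventually_lt_nhds hs))
    refine ⟨N, fun x hx => ?_⟩
    by_contra h
    exact absurd hx (not_le.2 (hN x (le_of_not_ge h)))
  rw [quantile, quantile]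
  refine le_csInf hne (fun x hx => ?_)
  have hd : 0 ≤ (t - s) / L := div_nonneg (sub_nonneg.2 hst) hL.le
  have hmem : x - (t - s) / L ∈ {y | s ≤ F y} := by
    have h1 : |F x - F (x - (t - s) / L)| ≤ L * |x - (x - (t - s) / L)| := hlip _ _
    have h2 : |x - (x - (t - s) / L)| = (t - s) / L := by
      rw [sub_sub_cancel, abs_of_nonneg hd]
    rw [h2] at h1
    have h3 : L * ((t - s) / L) = t - s := by field_simp
    have h4 : F x - F (x - (t - s) / L) ≤ t - s := (le_abs_self _).trans (h1.trans_eq h3)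
    have hx' : t ≤ F x := hx
    simp only [mem_setOf_eq]
    linarith
  have h5 : sInf {y | s ≤ F y} ≤ x - (t - s) / L := csInf_le hbd hmem
  linarith

private lemma integral_piece (q : ℝ → ℝ) (hq : IntervalIntegrable q volume 0 1)
    (c : ℝ) {x : ℝ} (hx : x ∈ Icc (0:ℝ) 1) :
    ∫ u in (0:ℝ)..x, (-(q (1 - u)) - c * u)
      = -(∫ t in (1 - x)..1, q t) - c * (x ^ 2 / 2) := by
  have hq1 : IntervalIntegrable (fun u => q (1 - u)) volume 0 1 := by
    simpa using (hq.comp_sub_left 1).symm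
  have hq1x : IntervalIntegrable (fun u => q (1 - u)) volume 0 x := by
    refine hq1.mono_set ?_
    rw [uIcc_of_le hx.1, uIcc_of_le (by norm_num : (0:ℝ) ≤ 1)]
    exact Icc_subset_Icc le_rfl hx.2
  have hneg : IntervalIntegrable (fun u => -(q (1 - u))) volume 0 x := by
    exact hq1x.neg
  have hcu : IntervalIntegrable (fun u : ℝ => c * u) volume 0 x :=
    (by fun_prop : Continuous (fun u : ℝ => c * u)).intervalIntegrable 0 x
  rw [intervalIntegral.integral_sub hneg hcu,
    intervalIntegral.integral_neg, intervalIntegral.integral_comp_sub_left q 1,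
    intervalIntegral.integral_const_mul, integral_id]
  norm_num

section Main

variable {K : ℕ} {L : ℝ} {F : Fin K → ℝ → ℝ}

private lemma coord_lemmas (hL : 0 < L)
    (hbot : ∀ k, Tendsto (F k) atBot (nhds 0))
    (htop : ∀ k, Tendsto (F k) atTop (nhds 1))
    (hlip : ∀ k, ∀ s t : ℝ, |F k s - F k t| ≤ L * |s - t|)
    (hint : ∀ k, IntegrableOn (quantile (F k)) (Ioo (0:ℝ) 1))
    (k : Fin K) (c : ℝ) (hc0 : 0 ≤ c) (hc1 : c ≤ 1 / L) :
    IntervalIntegrable (fun u => -(quantile (F k) (1 - u)) - c * u) volume 0 1 ∧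
    ConvexOn ℝ (Icc (0:ℝ) 1)
      (fun x => ∫ u in (0:ℝ)..x, (-(quantile (F k) (1 - u)) - c * u)) := by
  have hq : IntervalIntegrable (quantile (F k)) volume 0 1 := by
    rw [intervalIntegrable_iff_integrableOn_Icc_of_le (by norm_num),
      integrableOn_Icc_iff_integrableOn_Ioo]
    exact hint k
  have hq1 : IntervalIntegrable (fun u => quantile (F k) (1 - u)) volume 0 1 := by
    simpa using (hq.comp_sub_left 1).symm
  have hi : IntervalIntegrable (fun u => -(quantile (F k) (1 - u)) - c * u) volume 0 1 :=
    hq1.neg.sub ((continuous_const.mul continuous_id).intervalIntegrable 0 1)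
  refine ⟨hi, primitive_convexOn _ hi ?_⟩
  intro u v hu hv huv
  have hgap := quantile_gap (F k) L hL (hbot k) (htop k) (hlip k)
    (s := 1 - v) (t := 1 - u) (by linarith [hv.2]) (by linarith [hu.1]) (by linarith)
  have hcle : c * (v - u) ≤ (1 / L) * (v - u) :=
    mul_le_mul_of_nonneg_right hc1 (by linarith)
  have : (1 - u - (1 - v)) / L = (1 / L) * (v - u) := by ring
  rw [this] at hgap
  linarith

end Main

theorem stmt15 (K : ℕ) (hK : 1 ≤ K) (L : ℝ) (hL : 0 < L) (F : Fin K → ℝ → ℝ)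
    (hmono : ∀ k, Monotone (F k))
    (h01 : ∀ k s, F k s ∈ Icc (0:ℝ) 1)
    (hbot : ∀ k, Tendsto (F k) atBot (nhds 0))
    (htop : ∀ k, Tendsto (F k) atTop (nhds 1))
    (hlip : ∀ k, ∀ s t : ℝ, |F k s - F k t| ≤ L * |s - t|)
    (hint : ∀ k, IntegrableOn (quantile (F k)) (Ioo (0:ℝ) 1)) :
    ConvexOn ℝ (Icc (0 : Fin K → ℝ) 1) (reg F) ∧
    ContinuousOn (reg F) (Icc (0 : Fin K → ℝ) 1) ∧
    ConvexOn ℝ (Icc (0 : Fin K → ℝ) 1)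
      (fun p => reg F p - (∑ k, (p k) ^ 2) / (2 * L)) := by
  have hq : ∀ k, IntervalIntegrable (quantile (F k)) volume 0 1 := by
    intro k
    rw [intervalIntegrable_iff_integrableOn_Icc_of_le (by norm_num),
      integrableOn_Icc_iff_integrableOn_Ioo]
    exact hint k
  -- the coordinate primitives
  set g : ℝ → Fin K → ℝ → ℝ :=
    fun c k x => ∫ u in (0:ℝ)..x, (-(quantile (F k) (1 - u)) - c * u) with hg
  have hmem : ∀ {p : Fin K → ℝ}, p ∈ Icc (0 : Fin K → ℝ) 1 → ∀ k, p k ∈ Icc (0:ℝ) 1 :=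
    fun {p} hp k => ⟨hp.1 k, hp.2 k⟩
  -- convexity of the sums, for any admissible c
  have hconv : ∀ c, 0 ≤ c → c ≤ 1 / L →
      ConvexOn ℝ (Icc (0 : Fin K → ℝ) 1) (fun p => ∑ k, g c k (p k)) := by
    intro c hc0 hc1
    refine ⟨convex_Icc _ _, ?_⟩
    intro p hp q2 hq2 a b ha hb hab
    have hsum : ∀ k, g c k ((a • p + b • q2) k) ≤ a * g c k (p k) + b * g c k (q2 k) := by
      intro k
      have hck := (coord_lemmas hL hbot htop hlip hint k c hc0 hc1).2
      have := hck.2 (hmem hp k) (hmem hq2 k) ha hb hab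
      simpa [Pi.add_apply, Pi.smul_apply, smul_eq_mul] using this
    calc (∑ k, g c k ((a • p + b • q2) k)) ≤ ∑ k, (a * g c k (p k) + b * g c k (q2 k)) :=
          Finset.sum_le_sum (fun k _ => hsum k)
      _ = a • (∑ k, g c k (p k)) + b • (∑ k, g c k (q2 k)) := by
          rw [Finset.sum_add_distrib, ← Finset.mul_sum, ← Finset.mul_sum]
          simp [smul_eq_mul]
  -- identification of `reg` with the sum of primitives on the cube
  have hid : ∀ c, 0 ≤ c → c ≤ 1 / L → ∀ p ∈ Icc (0 : Fin K → ℝ) 1,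
      (∑ k, g c k (p k)) = reg F p - c * ∑ k, ((p k) ^ 2 / 2) := by
    intro c hc0 hc1 p hp
    rw [reg, Finset.mul_sum]
    rw [← Finset.sum_neg_distrib, ← Finset.sum_sub_distrib]
    refine Finset.sum_congr rfl (fun k _ => ?_)
    exact integral_piece (quantile (F k)) (hq k) c (hmem hp k)
  have h1L : (0:ℝ) ≤ 1 / L := by positivity
  -- first claim
  have hreg0 : ∀ p ∈ Icc (0 : Fin K → ℝ) 1, (∑ k, g 0 k (p k)) = reg F p := by
    intro p hp
    rw [hid 0 le_rfl h1L p hp]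
    simp
  have C1 : ConvexOn ℝ (Icc (0 : Fin K → ℝ) 1) (reg F) :=
    convexOn_congr' (hconv 0 le_rfl h1L) hreg0
  -- third claim
  have C3 : ConvexOn ℝ (Icc (0 : Fin K → ℝ) 1)
      (fun p => reg F p - (∑ k, (p k) ^ 2) / (2 * L)) := by
    refine convexOn_congr' (hconv (1/L) h1L le_rfl) ?_
    intro p hp
    have hsum : (1/L) * ∑ k, ((p k) ^ 2 / 2) = (∑ k, (p k) ^ 2) / (2 * L) := by
      rw [Finset.sum_div, Finset.mul_sum]
      refine Finset.sum_congr rfl (fun k _ => ?_)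
      rw [one_div_mul_eq_div, div_div]
    rw [hid (1/L) h1L le_rfl p hp, hsum]
  -- continuity
  have C2 : ContinuousOn (reg F) (Icc (0 : Fin K → ℝ) 1) := by
    have hcont : ∀ k, ContinuousOn (g 0 k) (Icc (0:ℝ) 1) := by
      intro k
      have hi := (coord_lemmas hL hbot htop hlip hint k 0 le_rfl h1L).1
      have : IntegrableOn (fun u => -(quantile (F k) (1 - u)) - 0 * u) (uIcc (0:ℝ) 1) := by
        rw [uIcc_of_le (by norm_num : (0:ℝ) ≤ 1)]
        exact (intervalIntegrable_iff_integrableOn_Icc_of_le (by norm_num)).1 hi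
      have := intervalIntegral.continuousOn_primitive_interval (a := (0:ℝ)) (b := 1) this
      rwa [uIcc_of_le (by norm_num : (0:ℝ) ≤ 1)] at this
    have : ContinuousOn (fun p : Fin K → ℝ => ∑ k, g 0 k (p k))
        (Icc (0 : Fin K → ℝ) 1) := by
      refine continuousOn_finset_sum _ (fun k _ => ?_)
      exact (hcont k).comp (continuous_apply k).continuousOn
        (fun p hp => hmem hp k)
    exact this.congr (fun p hp => (hreg0 p hp).symm)
  exact ⟨C1, C2, C3⟩
end

section
/- (Theorem 2, regret analysis of DOPA.) Let K ≥ 1 and let F_1,…,F_K : ℝ → [0,1] be cumulative distribution functions, each differentiable, strictly increasing at every s with F_k(s) ∈ (0,1), satisfying F_k(s) < 1 for all s ∈ ℝ, having finite first moment with ∫_0^1 F_k^{-1}(t) dt = 0 (equivalently, ∫_ℝ s F_k'(s) ds = 0). Suppose there exist γ ∈ (1,2) and B > 0 such that F_k'(F_k^{-1}(1−p)) ≤ B p^γ for all p ∈ (0,1) and all k ∈ [K]. For u ∈ ℝ^K let p(u) ∈ Δ^K be the unique maximizer of max_{p ∈ Δ^K} [ Σ_{k=1}^K u_k p_k + Σ_{k=1}^K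 ∫_{1−p_k}^1 F_k^{-1}(t) dt ] (which is componentwise strictly positive). Then for every horizon T ≥ 1 and every deterministic non-oblivious adversary, the regret of the learner in the bandit protocol run with the arm-sampling map p(·) satisfies R(T) ≤ Σ_{k=1}^K ∫_{1−p_k(0)}^1 F_k^{-1}(t) dt + (1/2)·B·T·K^{2−γ}, where p(0) is the maximizer at u = 0. -/
open Set Filter MeasureTheory

noncomputable def dopaObj {K : ℕ} (F : Fin K → ℝ → ℝ) (u p : Fin K → ℝ) : ℝ :=
  ∑ k, u k * p k + ∑ k, ∫ t in (1 - p k)..1, quantile (F k) t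

/- Histories of chosen arms are recorded as lists in reverse chronological order:
the head of the list is the most recently chosen arm.  A deterministic non-oblivious
adversary is a function `r : List (Fin K) → Fin K → ℝ` assigning a reward vector
to each history of previously chosen arms. -/

/-- Cumulative importance-weighted reward estimate `û` after the history `h`,
for the learner using the arm-sampling map `p`. -/
noncomputable def uhat {K : ℕ} (r : List (Fin K) → Fin K → ℝ)
    (p : (Fin K → ℝ) → (Fin K → ℝ)) : List (Fin K) → Fin K → ℝ
  | [] => fun _ => 0
  | a :: h => fun k =>
      uhat r p h k + (if k = a then r h a / p (uhat r p h) a else 0)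

/-- Probability that the learner using the arm-sampling map `p` produces the
history `h`. -/
noncomputable def histProb {K : ℕ} (r : List (Fin K) → Fin K → ℝ)
    (p : (Fin K → ℝ) → (Fin K → ℝ)) : List (Fin K) → ℝ
  | [] => 1
  | a :: h => histProb r p h * p (uhat r p h) a

/-- Total reward collected by the learner along the history `h`. -/
noncomputable def cumReward {K : ℕ} (r : List (Fin K) → Fin K → ℝ) :
    List (Fin K) → ℝ
  | [] => 0
  | a :: h => cumReward r h + r h a

/-- Total reward that arm `k` would have collected along the history `h`. -/
noncomputable def cumArm {K : ℕ} (r : List (Fin K) → Fin K → ℝ) (k : Fin K) :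
    List (Fin K) → ℝ
  | [] => 0
  | _ :: h => cumArm r k h + r h k

/-- The regret `R(T) = max_k E[∑_t r_{t,k}] − E[∑_t r_{t,a_t}]`, where the
expectation is the sum over all arm sequences of length `T` weighted by their
probabilities under the learner's process. -/
noncomputable def regret (K T : ℕ) (r : List (Fin K) → Fin K → ℝ)
    (p : (Fin K → ℝ) → (Fin K → ℝ)) : ℝ :=
  (⨆ k : Fin K, ∑ f : Fin T → Fin K,
      histProb r p (List.ofFn f).reverse * cumArm r k (List.ofFn f).reverse) -
    ∑ f : Fin T → Fin K,
      histProb r p (List.ofFn f).reverse * cumReward r (List.ofFn f).reverse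

set_option linter.unusedSectionVars false
set_option linter.unusedVariables false
set_option maxHeartbeats 1000000

section Quantile
variable {F : ℝ → ℝ} (hmono : Monotone F) (hcont : Continuous F)
  (h01 : ∀ s, F s ∈ Ico (0:ℝ) 1)
  (hbot : Tendsto F atBot (nhds 0)) (htop : Tendsto F atTop (nhds 1))
  (hstrict : StrictMonoOn F {s | F s ∈ Ioo (0:ℝ) 1})

include hmono htop in
lemma Qset_nonempty {s : ℝ} (hs1 : s < 1) : {t | s ≤ F t}.Nonempty := by
  have : ∀ᶠ t in atTop, F t ∈ Ioi s := htop (Ioi_mem_nhds hs1)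
  rcases this.exists with ⟨t, ht⟩
  exact ⟨t, le_of_lt (mem_Ioi.mp ht)⟩

include hmono hbot in
lemma Qset_bddBelow {s : ℝ} (hs0 : 0 < s) : BddBelow {t | s ≤ F t} := by
  have : ∀ᶠ t in atBot, F t ∈ Iio s := hbot (Iio_mem_nhds hs0)
  rcases this.exists with ⟨t0, ht0⟩
  refine ⟨t0, fun t ht => ?_⟩
  by_contra hc
  push_neg at hc
  exact absurd (le_trans ht (hmono hc.le)) (not_le.2 ht0)

include hmono hcont hbot htop in
lemma F_quantile {s : ℝ} (hs : s ∈ Ioo (0:ℝ) 1) : F (quantile F s) = s := by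
  have hne := Qset_nonempty hmono htop hs.2
  have hbd := Qset_bddBelow hmono hbot hs.1
  have hcl : IsClosed {t | s ≤ F t} := isClosed_le continuous_const hcont
  have h1 : s ≤ F (quantile F s) := hcl.csInf_mem hne hbd
  have h2 : F (quantile F s) ≤ s := by
    have key : ∀ n : ℕ, F (quantile F s - 1/(n+1)) ≤ s := by
      intro n
      by_contra hc
      push_neg at hc
      have h3 : quantile F s ≤ quantile F s - 1/(n+1) :=
        csInf_le hbd (mem_setOf_eq ▸ le_of_lt hc)
      have hpos : (0:ℝ) < 1/((n:ℝ)+1) := by positivity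
      linarith
    have htd : Tendsto (fun n : ℕ => F (quantile F s - 1/(n+1))) atTop
        (nhds (F (quantile F s))) := by
      apply (hcont.tendsto _).comp
      have : Tendsto (fun n : ℕ => 1/((n:ℝ)+1)) atTop (nhds 0) :=
        tendsto_one_div_add_atTop_nhds_zero_nat
      have h4 := Tendsto.sub (tendsto_const_nhds (x := quantile F s) (f := atTop (α := ℕ))) this
      simpa using h4
    exact le_of_tendsto htd (Eventually.of_forall key)
  linarith

include hmono hcont hbot htop hstrict in
lemma quantile_F {t : ℝ} (ht : F t ∈ Ioo (0:ℝ) 1) : quantile F (F t) = t := by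
  have hbd := Qset_bddBelow hmono hbot ht.1
  have hne : {t' | F t ≤ F t'}.Nonempty := ⟨t, mem_setOf_eq ▸ le_refl (F t)⟩
  have h1 : quantile F (F t) ≤ t := csInf_le hbd (mem_setOf_eq ▸ le_refl (F t))
  rcases eq_or_lt_of_le h1 with h | h
  · exact h
  · exfalso
    obtain ⟨t', ht', htt'⟩ := exists_lt_of_csInf_lt hne h
    have : F t' = F t := le_antisymm (hmono htt'.le) ht'
    have := hstrict (by rw [mem_setOf_eq, this]; exact ht) ht htt'
    rw [‹F t' = F t›] at this
    exact lt_irrefl _ this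

include hmono hbot htop in
lemma quantile_mono {s s' : ℝ} (hs : s ∈ Ioo (0:ℝ) 1) (hs' : s' ∈ Ioo (0:ℝ) 1)
    (h : s ≤ s') : quantile F s ≤ quantile F s' := by
  exact csInf_le_csInf (Qset_bddBelow hmono hbot hs.1)
    (Qset_nonempty hmono htop hs'.2) (fun t ht => le_trans h ht)

include hmono hcont hbot htop hstrict in
lemma quantile_continuousAt {s : ℝ} (hs : s ∈ Ioo (0:ℝ) 1) :
    ContinuousAt (quantile F) s := by
  set x0 := quantile F s with hx0
  have hFx0 : F x0 = s := F_quantile hmono hcont hbot htop hs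
  rw [ContinuousAt, tendsto_order]
  constructor
  · intro a ha
    set x := (a + x0)/2 with hx
    have hax : a < x := by rw [hx]; linarith
    have hxx0 : x < x0 := by rw [hx]; linarith
    have hFx : F x < s := by
      by_contra hc
      push_neg at hc
      have : quantile F s ≤ x := csInf_le (Qset_bddBelow hmono hbot hs.1) (mem_setOf_eq ▸ hc)
      linarith
    filter_upwards [Ioi_mem_nhds hFx, Iio_mem_nhds hs.2] with s' hs'1 hs'2
    have : x ≤ quantile F s' := by
      apply le_csInf (Qset_nonempty hmono htop hs'2)
      intro t ht
      by_contra hc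
      push_neg at hc
      have := hmono hc.le
      rw [mem_setOf_eq] at ht
      have : s' ≤ F x := le_trans ht this
      rw [mem_Ioi] at hs'1; linarith
    linarith
  · intro b hb
    set x := (x0 + b)/2 with hx
    have hx0x : x0 < x := by rw [hx]; linarith
    have hxb : x < b := by rw [hx]; linarith
    have hFx : s < F x := by
      rcases lt_or_eq_of_le (hmono hx0x.le) with h | h
      · rw [hFx0] at h; exact h
      · exfalso
        have hmem : F x ∈ Ioo (0:ℝ) 1 := by rw [← h, hFx0]; exact hs
        have hmem0 : F x0 ∈ Ioo (0:ℝ) 1 := by rw [hFx0]; exact hs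
        have := hstrict hmem0 hmem hx0x
        rw [← h] at this; exact lt_irrefl _ this
    filter_upwards [Iio_mem_nhds hFx, Ioi_mem_nhds hs.1] with s' hs'1 hs'2
    have : quantile F s' ≤ x :=
      csInf_le (Qset_bddBelow hmono hbot hs'2) (mem_setOf_eq ▸ le_of_lt hs'1)
    linarith
end Quantile

section L6
variable {F : ℝ → ℝ} (hmono : Monotone F) (hcont : Continuous F)
  (h01 : ∀ s, F s ∈ Ico (0:ℝ) 1)
  (hbot : Tendsto F atBot (nhds 0)) (htop : Tendsto F atTop (nhds 1))
  (hint : IntegrableOn (quantile F) (Ioo (0:ℝ) 1))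

-- assume monotonicity of quantile on Ioo as hypothesis to avoid re-imports
variable (hQmono : ∀ s s', s ∈ Ioo (0:ℝ) 1 → s' ∈ Ioo (0:ℝ) 1 → s ≤ s' → quantile F s ≤ quantile F s')

include hint in
lemma QIoc_int {x y : ℝ} (hx : 0 ≤ x) (hy : y ≤ 1) :
    IntegrableOn (quantile F) (Ioc x y) := by
  rw [integrableOn_Ioc_iff_integrableOn_Ioo]
  exact hint.mono_set (Ioo_subset_Ioo hx hy)

include hint in
lemma QII {x y : ℝ} (hx : 0 ≤ x) (hx' : x ≤ y) (hy : y ≤ 1) :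
    IntervalIntegrable (quantile F) volume x y := by
  rw [intervalIntegrable_iff, uIoc_of_le hx']
  exact QIoc_int hint hx hy

include hint hQmono in
/-- supergradient inequality: ρ b - ρ a ≤ (b-a) * Q(1-a) for a ∈ (0,1), b ∈ [0,1] -/
lemma rho_supergrad {a b : ℝ} (ha : a ∈ Ioo (0:ℝ) 1) (hb : b ∈ Icc (0:ℝ) 1) :
    (∫ t in (1-b)..1, quantile F t) - ∫ t in (1-a)..1, quantile F t ≤
      (b - a) * quantile F (1-a) := by
  obtain ⟨ha1, ha2⟩ := ha
  obtain ⟨hb1, hb2⟩ := hb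
  have ha' : (1:ℝ) - a ∈ Ioo (0:ℝ) 1 := ⟨by linarith, by linarith⟩
  rcases le_or_gt a b with hab | hab
  · -- 1-b ≤ 1-a
    have h1 : (1:ℝ) - b ≤ 1 - a := by linarith
    have hsplit : (∫ t in (1-b)..(1-a), quantile F t) + ∫ t in (1-a)..1, quantile F t
        = ∫ t in (1-b)..1, quantile F t :=
      intervalIntegral.integral_add_adjacent_intervals
        (QII hint (by linarith) h1 (by linarith))
        (QII hint (by linarith) (by linarith) le_rfl)
    have key : (∫ t in (1-b)..(1-a), quantile F t) ≤ (b - a) * quantile F (1-a) := by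
      rw [intervalIntegral.integral_of_le h1, integral_Ioc_eq_integral_Ioo]
      have hmeas : MeasurableSet (Ioo (1-b) (1-a)) := measurableSet_Ioo
      have hle : ∀ t ∈ Ioo (1-b) (1-a), quantile F t ≤ quantile F (1-a) := by
        intro t ht
        refine hQmono t (1-a) ⟨by linarith [ht.1], by linarith [ht.2, ha'.2]⟩ ha' ht.2.le
      calc ∫ t in Ioo (1-b) (1-a), quantile F t
          ≤ ∫ _t in Ioo (1-b) (1-a), quantile F (1-a) := by
            apply setIntegral_mono_on _ _ hmeas hle
            · exact (hint.mono_set (fun t ht => ⟨by linarith [ht.1], by linarith [ht.2, ha'.2]⟩))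
            · exact integrableOn_const measure_Ioo_lt_top.ne
        _ = (b - a) * quantile F (1-a) := by
            rw [setIntegral_const, Real.volume_real_Ioo_of_le (by linarith), smul_eq_mul]
            ring_nf
    linarith [hsplit, key]
  · -- b < a : 1-a < 1-b
    have h1 : (1:ℝ) - a ≤ 1 - b := by linarith
    have hsplit : (∫ t in (1-a)..(1-b), quantile F t) + ∫ t in (1-b)..1, quantile F t
        = ∫ t in (1-a)..1, quantile F t :=
      intervalIntegral.integral_add_adjacent_intervals
        (QII hint (by linarith) h1 (by linarith))
        (QII hint (by linarith) (by linarith) le_rfl)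
    have key : (a - b) * quantile F (1-a) ≤ ∫ t in (1-a)..(1-b), quantile F t := by
      rw [intervalIntegral.integral_of_le h1, integral_Ioc_eq_integral_Ioo]
      have hmeas : MeasurableSet (Ioo (1-a) (1-b)) := measurableSet_Ioo
      have hsub : Ioo (1-a) (1-b) ⊆ Ioo (0:ℝ) 1 := by
        intro t ht; exact ⟨by linarith [ht.1, ha'.1], by linarith [ht.2]⟩
      have hle : ∀ t ∈ Ioo (1-a) (1-b), quantile F (1-a) ≤ quantile F t := by
        intro t ht
        exact hQmono (1-a) t ha' (hsub ht) ht.1.le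
      calc (a - b) * quantile F (1-a)
          = ∫ _t in Ioo (1-a) (1-b), quantile F (1-a) := by
            rw [setIntegral_const, Real.volume_real_Ioo_of_le (by linarith), smul_eq_mul]
            ring_nf
        _ ≤ ∫ t in Ioo (1-a) (1-b), quantile F t := by
            apply setIntegral_mono_on _ _ hmeas hle
            · exact integrableOn_const measure_Ioo_lt_top.ne
            · exact hint.mono_set hsub
    linarith [hsplit, key]
end L6

section Hist
variable {K : ℕ} (r : List (Fin K) → Fin K → ℝ) (p : (Fin K → ℝ) → (Fin K → ℝ))

lemma hsum_succ (t : ℕ) (g : List (Fin K) → ℝ) :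
    ∑ f : Fin (t+1) → Fin K, g (List.ofFn f).reverse
      = ∑ f : Fin t → Fin K, ∑ a : Fin K, g (a :: (List.ofFn f).reverse) := by
  rw [← Equiv.sum_comp (Fin.snocEquiv (fun _ => Fin K))
    (fun f => g (List.ofFn f).reverse), Fintype.sum_prod_type]
  rw [Finset.sum_comm]
  apply Finset.sum_congr rfl
  intro f _
  apply Finset.sum_congr rfl
  intro a _
  congr 1
  have : List.ofFn (Fin.snocEquiv (fun _ => Fin K) (a, f))
      = (List.ofFn f).concat a := by
    rw [List.ofFn_succ']
    congr 1
    · congr 1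
      funext i
      simp [Fin.snocEquiv]
    · simp [Fin.snocEquiv]
  rw [this]
  simp [List.concat_eq_append]

variable (hppos : ∀ u a, 0 < p u a) (hpsum : ∀ u, ∑ a, p u a = 1)

include hppos in
lemma histProb_nonneg : ∀ h : List (Fin K), 0 ≤ histProb r p h := by
  intro h
  induction h with
  | nil => rw [histProb]; norm_num
  | cons a h ih =>
    rw [histProb]
    exact mul_nonneg ih (hppos _ _).le

include hppos hpsum in
lemma sumP (t : ℕ) :
    ∑ f : Fin t → Fin K, histProb r p (List.ofFn f).reverse = 1 := by
  induction t with
  | zero =>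
    have h1 : ∀ f : Fin 0 → Fin K, histProb r p (List.ofFn f).reverse = 1 := by
      intro f
      rw [List.ofFn_zero, List.reverse_nil, histProb]
    rw [Finset.sum_congr rfl (fun f _ => h1 f), Finset.sum_const, Finset.card_univ]
    simp
  | succ t ih =>
    rw [hsum_succ t (histProb r p)]
    have : ∀ f : Fin t → Fin K, ∑ a, histProb r p (a :: (List.ofFn f).reverse)
        = histProb r p (List.ofFn f).reverse := by
      intro f
      simp only [histProb]
      rw [← Finset.mul_sum, hpsum, mul_one]
    rw [Finset.sum_congr rfl (fun f _ => this f)]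
    exact ih

include hppos hpsum in
lemma unbiased (t : ℕ) (k : Fin K) :
    ∑ f : Fin t → Fin K, histProb r p (List.ofFn f).reverse * uhat r p (List.ofFn f).reverse k
      = ∑ f : Fin t → Fin K, histProb r p (List.ofFn f).reverse * cumArm r k (List.ofFn f).reverse := by
  induction t with
  | zero =>
    apply Finset.sum_congr rfl
    intro f _
    rw [List.ofFn_zero, List.reverse_nil]
    rw [uhat, cumArm]
  | succ t ih =>
    rw [hsum_succ t (fun h => histProb r p h * uhat r p h k),
      hsum_succ t (fun h => histProb r p h * cumArm r k h)]
    have hL : ∀ f : Fin t → Fin K,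
        ∑ a, histProb r p (a :: (List.ofFn f).reverse) * uhat r p (a :: (List.ofFn f).reverse) k
        = histProb r p (List.ofFn f).reverse * uhat r p (List.ofFn f).reverse k
          + histProb r p (List.ofFn f).reverse * r (List.ofFn f).reverse k := by
      intro f
      set h := (List.ofFn f).reverse with hh
      set w := uhat r p h with hwdef
      have hstep1 : ∑ a, histProb r p (a :: h) * uhat r p (a :: h) k
          = ∑ a, (histProb r p h * p w a * w k
              + histProb r p h * (if k = a then p w a * (r h a / p w a) else 0)) := by
        apply Finset.sum_congr rfl
        intro a _
        rw [show uhat r p (a :: h) k = w k + (if k = a then r h a / p w a else 0) from by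
          rw [uhat], show histProb r p (a :: h) = histProb r p h * p w a from by
          rw [histProb]]
        rcases eq_or_ne k a with rfl | hka
        · rw [if_pos rfl, if_pos rfl]; ring
        · rw [if_neg hka, if_neg hka]; ring
      rw [hstep1, Finset.sum_add_distrib]
      congr 1
      · rw [← Finset.sum_mul, ← Finset.mul_sum, hpsum, mul_one]
      · rw [← Finset.mul_sum]
        congr 1
        rw [Finset.sum_ite_eq, if_pos (Finset.mem_univ k), mul_comm,
          div_mul_cancel₀ _ (ne_of_gt (hppos w k))]
    have hR : ∀ f : Fin t → Fin K,
        ∑ a, histProb r p (a :: (List.ofFn f).reverse) * cumArm r k (a :: (List.ofFn f).reverse)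
        = histProb r p (List.ofFn f).reverse * cumArm r k (List.ofFn f).reverse
          + histProb r p (List.ofFn f).reverse * r (List.ofFn f).reverse k := by
      intro f
      set h := (List.ofFn f).reverse with hh
      have h2 : ∀ a : Fin K, histProb r p (a :: h) * cumArm r k (a :: h)
          = histProb r p h * p (uhat r p h) a * (cumArm r k h + r h k) := by
        intro a; rw [histProb, cumArm]
      rw [Finset.sum_congr rfl (fun a _ => h2 a), ← Finset.sum_mul, ← Finset.mul_sum,
        hpsum, mul_one]
      ring
    rw [Finset.sum_congr rfl (fun f _ => hL f), Finset.sum_congr rfl (fun f _ => hR f),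
      Finset.sum_add_distrib, Finset.sum_add_distrib, ih]

end Hist

section Main
variable {K : ℕ} {F F' : Fin K → ℝ → ℝ}
  (hmono : ∀ k, Monotone (F k))
  (hderiv : ∀ k s, HasDerivAt (F k) (F' k s) s)
  (h01 : ∀ k s, F k s ∈ Ico (0:ℝ) 1)
  (hbot : ∀ k, Tendsto (F k) atBot (nhds 0))
  (htop : ∀ k, Tendsto (F k) atTop (nhds 1))
  (hstrict : ∀ k, StrictMonoOn (F k) {s | F k s ∈ Ioo (0:ℝ) 1})
  (hint : ∀ k, IntegrableOn (quantile (F k)) (Ioo (0:ℝ) 1))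
  (hzero : ∀ k, ∫ t in (0:ℝ)..1, quantile (F k) t = 0)
  {γ B : ℝ} (hγ : γ ∈ Ioo (1:ℝ) 2) (hB : 0 < B)
  (hgrowth : ∀ k, ∀ q ∈ Ioo (0:ℝ) 1, F' k (quantile (F k) (1 - q)) ≤ B * q ^ γ)
  {p : (Fin K → ℝ) → (Fin K → ℝ)}
  (hp : ∀ u, p u ∈ simplex K ∧ (∀ k, 0 < p u k) ∧
      IsMaxOn (dopaObj F u) (simplex K) (p u) ∧
      ∀ q ∈ simplex K, IsMaxOn (dopaObj F u) (simplex K) q → q = p u)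

include hderiv in
lemma Fcont (k : Fin K) : Continuous (F k) :=
  continuous_iff_continuousAt.mpr fun x => (hderiv k x).continuousAt

include hp in
lemma pk_lt_one (hK2 : 2 ≤ K) (u : Fin K → ℝ) (k : Fin K) : p u k < 1 := by
  have : Nontrivial (Fin K) := Fin.nontrivial_iff_two_le.mpr hK2
  obtain ⟨j, hj⟩ := exists_ne k
  have hsub : ({k, j} : Finset (Fin K)) ⊆ Finset.univ := Finset.subset_univ _
  have hsum : ∑ m ∈ ({k, j} : Finset (Fin K)), p u m ≤ ∑ m, p u m :=
    Finset.sum_le_sum_of_subset_of_nonneg hsub (fun m _ _ => ((hp u).1.1 m))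
  rw [Finset.sum_pair (Ne.symm hj), (hp u).1.2] at hsum
  have := (hp u).2.1 j
  linarith

include hmono hderiv h01 hbot htop hstrict hint hzero hp in
lemma vertex_le (w : Fin K → ℝ) (k : Fin K) : w k ≤ dopaObj F w (p w) := by
  set e : Fin K → ℝ := fun m => if m = k then (1:ℝ) else 0 with he
  have hes : e ∈ simplex K := by
    constructor
    · intro m; by_cases h : m = k <;> simp [he, h]
    · simp [he]
  have hmax := (hp w).2.2.1 hes
  have hval : dopaObj F w e = w k := by
    rw [dopaObj]
    have h1 : ∑ m, w m * e m = w k := by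
      simp [he, mul_ite, Finset.sum_ite_eq']
    have h2 : ∑ m, (∫ t in (1 - e m)..1, quantile (F m) t) = 0 := by
      apply Finset.sum_eq_zero
      intro m _
      by_cases h : m = k
      · subst h
        simp only [he, if_pos rfl]
        norm_num
        exact hzero m
      · simp only [he, if_neg h]
        norm_num
    rw [h1, h2, add_zero]
  calc w k = dopaObj F w e := hval.symm
    _ ≤ dopaObj F w (p w) := hmax
include hmono hderiv h01 hbot htop hstrict hint hzero hp in
lemma foc (hK2 : 2 ≤ K) (u : Fin K → ℝ) (k j : Fin K) :
    u k + quantile (F k) (1 - p u k) = u j + quantile (F j) (1 - p u j) := by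
  suffices hle : ∀ k j : Fin K,
      u k + quantile (F k) (1 - p u k) ≤ u j + quantile (F j) (1 - p u j) by
    exact le_antisymm (hle k j) (hle j k)
  intro k j
  rcases eq_or_ne k j with rfl | hkj
  · rfl
  set P := p u with hP
  have hpos : ∀ m, 0 < P m := (hp u).2.1
  have hlt1 : ∀ m, P m < 1 := fun m => pk_lt_one hp hK2 u m
  have hsum1 : ∑ m, P m = 1 := (hp u).1.2
  set δ : ℝ := min (P j) (1 - P k) with hδ
  have hδpos : 0 < δ := lt_min (hpos j) (by linarith [hlt1 k])
  have key : ∀ ε ∈ Ioo (0:ℝ) δ,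
      u k + quantile (F k) (1 - P k - ε) ≤ u j + quantile (F j) (1 - P j + ε) := by
    intro ε ⟨hε0, hεδ⟩
    have hεj : ε < P j := lt_of_lt_of_le hεδ (min_le_left _ _)
    have hεk : ε < 1 - P k := lt_of_lt_of_le hεδ (min_le_right _ _)
    set q : Fin K → ℝ := fun m => P m + (if m = k then ε else 0) - (if m = j then ε else 0) with hq
    have hqs : q ∈ simplex K := by
      constructor
      · intro m
        rcases eq_or_ne m k with rfl | hmk
        · simp [hq, if_neg hkj]
          linarith [hpos m]
        · rcases eq_or_ne m j with rfl | hmj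
          · simp [hq, if_neg hmk]
            linarith [hεj]
          · simp [hq, if_neg hmk, if_neg hmj]
            exact (hpos m).le
      · simp only [hq, Finset.sum_sub_distrib, Finset.sum_add_distrib,
          Finset.sum_ite_eq', Finset.mem_univ, if_pos]
        rw [hsum1]; ring
    have hmax := (hp u).2.2.1 hqs
    -- expand difference of objectives
    have hlin : ∑ m, u m * q m = (∑ m, u m * P m) + ε * u k - ε * u j := by
      simp only [hq, mul_sub, mul_add, Finset.sum_sub_distrib, Finset.sum_add_distrib,
        mul_ite, mul_zero, Finset.sum_ite_eq', Finset.mem_univ, if_pos]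
      ring
    have hrho : ∑ m, (∫ t in (1 - q m)..1, quantile (F m) t)
        = (∑ m, (∫ t in (1 - P m)..1, quantile (F m) t))
          + ((∫ t in (1 - (P k + ε))..1, quantile (F k) t) - (∫ t in (1 - P k)..1, quantile (F k) t))
          + ((∫ t in (1 - (P j - ε))..1, quantile (F j) t) - (∫ t in (1 - P j)..1, quantile (F j) t)) := by
      have hsplit : ∀ (g : Fin K → ℝ), (∀ m, m ≠ k → m ≠ j → g m = 0) →
          ∑ m, g m = g k + g j := by
        intro g hg
        rw [← Finset.sum_pair hkj]
        symm
        apply Finset.sum_subset (Finset.subset_univ _)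
        intro m _ hm
        simp only [Finset.mem_insert, Finset.mem_singleton, not_or] at hm
        exact hg m hm.1 hm.2
      have := hsplit (fun m => (∫ t in (1 - q m)..1, quantile (F m) t)
          - (∫ t in (1 - P m)..1, quantile (F m) t)) (by
        intro m h1 h2
        have hqm : q m = P m := by simp [hq, if_neg h1, if_neg h2]
        show (∫ t in (1 - q m)..1, quantile (F m) t) - (∫ t in (1 - P m)..1, quantile (F m) t) = 0
        rw [hqm]; ring)
      rw [Finset.sum_sub_distrib] at this
      have hqk : q k = P k + ε := by simp [hq, if_neg hkj]
      have hqj : q j = P j - ε := by simp [hq, if_neg (Ne.symm hkj)]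
      rw [hqk, hqj] at this
      linarith [this]
    have h1 : ε * quantile (F k) (1 - P k - ε)
        ≤ (∫ t in (1 - (P k + ε))..1, quantile (F k) t) - (∫ t in (1 - P k)..1, quantile (F k) t) := by
      have := rho_supergrad (hint k)
        (fun s s' hs hs' hss' => quantile_mono (hmono k) (hbot k) (htop k) hs hs' hss')
        (a := P k + ε) (b := P k) ⟨by linarith [hpos k], by linarith⟩
        ⟨(hpos k).le, (hlt1 k).le⟩
      have harg : quantile (F k) (1 - (P k + ε)) = quantile (F k) (1 - P k - ε) := by
        congr 1; ring
      rw [harg] at this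
      linarith [this]
    have h2 : -(ε * quantile (F j) (1 - P j + ε))
        ≤ (∫ t in (1 - (P j - ε))..1, quantile (F j) t) - (∫ t in (1 - P j)..1, quantile (F j) t) := by
      have := rho_supergrad (hint j)
        (fun s s' hs hs' hss' => quantile_mono (hmono j) (hbot j) (htop j) hs hs' hss')
        (a := P j - ε) (b := P j) ⟨by linarith, by linarith [hlt1 j]⟩
        ⟨(hpos j).le, (hlt1 j).le⟩
      have harg : quantile (F j) (1 - (P j - ε)) = quantile (F j) (1 - P j + ε) := by
        congr 1; ring
      rw [harg] at this
      linarith [this]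
    have hexp : dopaObj F u q ≤ dopaObj F u P := hmax
    rw [dopaObj, dopaObj, hlin, hrho] at hexp
    have : ε * (u k + quantile (F k) (1 - P k - ε)) ≤ ε * (u j + quantile (F j) (1 - P j + ε)) := by
      nlinarith [h1, h2, hexp]
    exact le_of_mul_le_mul_left (by linarith [this]) hε0
  -- take the limit ε → 0⁺
  have hPk : (1:ℝ) - P k ∈ Ioo (0:ℝ) 1 := ⟨by linarith [hlt1 k], by linarith [hpos k]⟩
  have hPj : (1:ℝ) - P j ∈ Ioo (0:ℝ) 1 := ⟨by linarith [hlt1 j], by linarith [hpos j]⟩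
  have hck : ContinuousAt (quantile (F k)) (1 - P k) :=
    quantile_continuousAt (hmono k) (Fcont hderiv k) (hbot k) (htop k) (hstrict k) hPk
  have hcj : ContinuousAt (quantile (F j)) (1 - P j) :=
    quantile_continuousAt (hmono j) (Fcont hderiv j) (hbot j) (htop j) (hstrict j) hPj
  have t1 : Tendsto (fun ε : ℝ => u k + quantile (F k) (1 - P k - ε)) (nhdsWithin 0 (Ioi 0))
      (nhds (u k + quantile (F k) (1 - P k))) := by
    apply Tendsto.const_add
    apply hck.tendsto.comp
    apply Tendsto.mono_left _ nhdsWithin_le_nhds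
    have : Tendsto (fun ε : ℝ => 1 - P k - ε) (nhds 0) (nhds (1 - P k - 0)) :=
      (continuous_const.sub continuous_id).tendsto 0
    simpa using this
  have t2 : Tendsto (fun ε : ℝ => u j + quantile (F j) (1 - P j + ε)) (nhdsWithin 0 (Ioi 0))
      (nhds (u j + quantile (F j) (1 - P j))) := by
    apply Tendsto.const_add
    apply hcj.tendsto.comp
    apply Tendsto.mono_left _ nhdsWithin_le_nhds
    have : Tendsto (fun ε : ℝ => 1 - P j + ε) (nhds 0) (nhds (1 - P j + 0)) :=
      (continuous_const.add continuous_id).tendsto 0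
    simpa using this
  refine le_of_tendsto_of_tendsto t1 t2 ?_
  filter_upwards [Ioo_mem_nhdsGT_of_mem (left_mem_Ico.2 hδpos)] with ε hε
  exact key ε hε

include hmono hderiv h01 hbot htop hstrict hint hzero hγ hB hgrowth hp in
lemma lipschitz (u : Fin K → ℝ) (k : Fin K) {ε : ℝ} (hε : 0 ≤ ε) :
    0 ≤ p u k - p (fun m => u m - if m = k then ε else 0) k ∧
    p u k - p (fun m => u m - if m = k then ε else 0) k ≤ B * (p u k) ^ γ * ε := by
  set v : Fin K → ℝ := fun m => u m - if m = k then ε else 0 with hv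
  have hγ0 : (0:ℝ) < γ := by linarith [hγ.1]
  rcases eq_or_lt_of_le hε with rfl | hε0
  · have : v = u := by funext m; simp [hv]
    rw [this]
    constructor <;> simp
  rcases lt_or_ge K 2 with hK1 | hK2
  · -- K = 1 : p is identically 1
    have hKpos : 0 < K := k.pos
    have hK1' : K = 1 := by omega
    subst hK1'
    have hone : ∀ w : Fin 1 → ℝ, p w k = 1 := by
      intro w
      have h1 := (hp w).1.2
      rw [Fin.sum_univ_one] at h1
      have hk0 : k = 0 := Subsingleton.elim k 0
      rw [hk0]; exact h1
    rw [hone u, hone v]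
    refine ⟨by linarith, ?_⟩
    rw [Real.one_rpow]
    nlinarith [mul_pos hB hε0]
  -- main case K ≥ 2
  haveI : Nonempty (Fin K) := ⟨k⟩
  have hposu : ∀ m, 0 < p u m := (hp u).2.1
  have hposv : ∀ m, 0 < p v m := (hp v).2.1
  have hlt1u : ∀ m, p u m < 1 := fun m => pk_lt_one hp hK2 u m
  have hlt1v : ∀ m, p v m < 1 := fun m => pk_lt_one hp hK2 v m
  have hQ : ∀ (i : Fin K) {a b : ℝ}, a ∈ Ioo (0:ℝ) 1 → b ∈ Ioo (0:ℝ) 1 → a ≤ b →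
      quantile (F i) a ≤ quantile (F i) b :=
    fun i a b ha hb hab => quantile_mono (hmono i) (hbot i) (htop i) ha hb hab
  have hFQ : ∀ (i : Fin K) {a : ℝ}, a ∈ Ioo (0:ℝ) 1 → F i (quantile (F i) a) = a :=
    fun i a ha => F_quantile (hmono i) (Fcont hderiv i) (hbot i) (htop i) ha
  have hmemu : ∀ m, (1:ℝ) - p u m ∈ Ioo (0:ℝ) 1 :=
    fun m => ⟨by linarith [hlt1u m], by linarith [hposu m]⟩
  have hmemv : ∀ m, (1:ℝ) - p v m ∈ Ioo (0:ℝ) 1 :=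
    fun m => ⟨by linarith [hlt1v m], by linarith [hposv m]⟩
  set lam : ℝ := u k + quantile (F k) (1 - p u k) with hlam
  set lam' : ℝ := v k + quantile (F k) (1 - p v k) with hlam'
  have hfocu : ∀ m, u m + quantile (F m) (1 - p u m) = lam :=
    fun m => foc hmono hderiv h01 hbot htop hstrict hint hzero hp hK2 u m k
  have hfocv : ∀ m, v m + quantile (F m) (1 - p v m) = lam' :=
    fun m => foc hmono hderiv h01 hbot htop hstrict hint hzero hp hK2 v m k
  have hvk : v k = u k - ε := by simp [hv]
  have hvm : ∀ m, m ≠ k → v m = u m := fun m hm => by simp [hv, if_neg hm]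
  -- contrapositive monotonicity helper
  have hcontra : ∀ (i : Fin K) (a b : Fin K → ℝ),
      (∀ m, 0 < a m) → (∀ m, a m < 1) → (∀ m, 0 < b m) → (∀ m, b m < 1) →
      quantile (F i) (1 - a i) < quantile (F i) (1 - b i) → b i < a i := by
    intro i a b ha1 ha2 hb1 hb2 hlt
    by_contra hc
    push_neg at hc
    have := hQ i (a := 1 - b i) (b := 1 - a i)
      ⟨by linarith [hb2 i], by linarith [hb1 i]⟩
      ⟨by linarith [ha2 i], by linarith [ha1 i]⟩ (by linarith)
    linarith
  have hlam_le : lam' ≤ lam := by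
    by_contra hc
    push_neg at hc
    have hall : ∀ m, p v m < p u m := by
      intro m
      have e1 : quantile (F m) (1 - p v m) = lam' - v m := by linarith [hfocv m]
      have e2 : quantile (F m) (1 - p u m) = lam - u m := by linarith [hfocu m]
      rcases eq_or_ne m k with rfl | hm
      · have : quantile (F m) (1 - p u m) < quantile (F m) (1 - p v m) := by
          rw [e1, e2, hvk]; linarith
        exact hcontra m (p u) (p v) hposu hlt1u hposv hlt1v this
      · have : quantile (F m) (1 - p u m) < quantile (F m) (1 - p v m) := by
          rw [e1, e2, hvm m hm]; linarith
        exact hcontra m (p u) (p v) hposu hlt1u hposv hlt1v this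
    have : ∑ m, p v m < ∑ m, p u m :=
      Finset.sum_lt_sum_of_nonempty Finset.univ_nonempty (fun m _ => hall m)
    rw [(hp u).1.2, (hp v).1.2] at this
    exact lt_irrefl _ this
  have hlam_ge : lam - ε ≤ lam' := by
    by_contra hc
    push_neg at hc
    have hall : ∀ m, p u m < p v m := by
      intro m
      have e1 : quantile (F m) (1 - p v m) = lam' - v m := by linarith [hfocv m]
      have e2 : quantile (F m) (1 - p u m) = lam - u m := by linarith [hfocu m]
      rcases eq_or_ne m k with rfl | hm
      · have : quantile (F m) (1 - p v m) < quantile (F m) (1 - p u m) := by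
          rw [e1, e2, hvk]; linarith
        exact hcontra m (p v) (p u) hposv hlt1v hposu hlt1u this
      · have : quantile (F m) (1 - p v m) < quantile (F m) (1 - p u m) := by
          rw [e1, e2, hvm m hm]; linarith
        exact hcontra m (p v) (p u) hposv hlt1v hposu hlt1u this
    have : ∑ m, p u m < ∑ m, p v m :=
      Finset.sum_lt_sum_of_nonempty Finset.univ_nonempty (fun m _ => hall m)
    rw [(hp u).1.2, (hp v).1.2] at this
    exact lt_irrefl _ this
  set x : ℝ := quantile (F k) (1 - p u k) with hx
  set y : ℝ := quantile (F k) (1 - p v k) with hy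
  have hyx : x ≤ y ∧ y ≤ x + ε := by
    constructor
    · have : y = lam' - v k := by linarith [hfocv k]
      rw [this, hvk]
      have : x = lam - u k := by linarith [hfocu k]
      rw [this]
      linarith
    · have h1 : y = lam' - v k := by linarith [hfocv k]
      have h2 : x = lam - u k := by linarith [hfocu k]
      rw [h1, h2, hvk]
      linarith
  have hmono_pv : p v k ≤ p u k := by
    by_contra hc
    push_neg at hc
    have := hcontra k (p v) (p u) hposv hlt1v hposu hlt1u
    have hxy : quantile (F k) (1 - p v k) < quantile (F k) (1 - p u k) → p u k < p v k :=
      hcontra k (p v) (p u) hposv hlt1v hposu hlt1u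
    -- p v k > p u k means 1 - p v k < 1 - p u k, so F(y) < F(x), but y ≥ x so F(y) ≥ F(x)
    have hFy : F k y = 1 - p v k := hFQ k (hmemv k)
    have hFx : F k x = 1 - p u k := hFQ k (hmemu k)
    have := hmono k hyx.1
    rw [hFx, hFy] at this
    linarith
  refine ⟨by linarith, ?_⟩
  -- now the MVT bound
  have hdiff : p u k - p v k = F k y - F k x := by
    have hFy : F k y = 1 - p v k := hFQ k (hmemv k)
    have hFx : F k x = 1 - p u k := hFQ k (hmemu k)
    rw [hFy, hFx]; ring
  have hstep : F k y - F k x ≤ F k (x + ε) - F k x := by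
    have := hmono k hyx.2
    linarith
  obtain ⟨ξ, hξmem, hξ⟩ := exists_hasDerivAt_eq_slope (F k) (F' k) (by linarith : x < x + ε)
    ((Fcont hderiv k).continuousOn) (fun z _ => hderiv k z)
  have hslope : F k (x + ε) - F k x = ε * F' k ξ := by
    rw [hξ, add_sub_cancel_left]
    field_simp
  have hFξ_bound : F' k ξ ≤ B * (p u k) ^ γ := by
    set s : ℝ := F k ξ with hs
    have hFx : F k x = 1 - p u k := hFQ k (hmemu k)
    have hs_lb : 1 - p u k ≤ s := by
      rw [← hFx]; exact hmono k hξmem.1.le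
    have hs_ub : s < 1 := (h01 k ξ).2
    have hs_pos : 0 < s := by linarith [hposu k, hlt1u k]
    set q : ℝ := 1 - s with hqdef
    have hq_mem : q ∈ Ioo (0:ℝ) 1 := ⟨by linarith, by linarith⟩
    have hq_le : q ≤ p u k := by simp [hqdef]; linarith
    have hQs : quantile (F k) (1 - q) = ξ := by
      have : (1:ℝ) - q = s := by ring
      rw [this, hs]
      exact quantile_F (hmono k) (Fcont hderiv k) (hbot k) (htop k) (hstrict k)
        ⟨hs_pos, hs_ub⟩
    have := hgrowth k q hq_mem
    rw [hQs] at this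
    have hpow : q ^ γ ≤ (p u k) ^ γ :=
      Real.rpow_le_rpow (le_of_lt hq_mem.1) hq_le hγ0.le
    calc F' k ξ ≤ B * q ^ γ := this
      _ ≤ B * (p u k) ^ γ := by nlinarith [hB]
  calc p u k - p v k = F k y - F k x := hdiff
    _ ≤ F k (x + ε) - F k x := hstep
    _ = ε * F' k ξ := hslope
    _ ≤ ε * (B * (p u k) ^ γ) := by nlinarith [hε0]
    _ = B * (p u k) ^ γ * ε := by ring

include hp in
lemma grad_lb (u v : Fin K → ℝ) :
    dopaObj F u (p u) + ∑ m, (v m - u m) * p u m ≤ dopaObj F v (p v) := by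
  have hmax := (hp v).2.2.1 ((hp u).1)
  have : dopaObj F v (p u) = dopaObj F u (p u) + ∑ m, (v m - u m) * p u m := by
    rw [dopaObj, dopaObj]
    have : ∑ m, v m * p u m = ∑ m, u m * p u m + ∑ m, (v m - u m) * p u m := by
      rw [← Finset.sum_add_distrib]
      apply Finset.sum_congr rfl
      intros; ring
    rw [this]; ring
  rw [← this]
  exact hmax

include hmono hderiv h01 hbot htop hstrict hint hzero hγ hB hgrowth hp in
lemma stability (u : Fin K → ℝ) (k : Fin K) {c : ℝ} (hc : c ≤ 0) :
    dopaObj F (fun m => u m + if m = k then c else 0)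
        (p (fun m => u m + if m = k then c else 0))
      ≤ dopaObj F u (p u) + c * p u k + (1/2) * B * c^2 * (p u k) ^ γ := by
  set w : ℝ → (Fin K → ℝ) := fun s => fun m => u m + if m = k then s * c else 0 with hw
  have hw0 : w 0 = u := by funext m; simp [hw]
  have hw1 : w 1 = fun m => u m + if m = k then c else 0 := by
    funext m; simp [hw]
  set pk := p u k with hpk
  have hpkpos : 0 < pk := (hp u).2.1 k
  have hγ0 : (0:ℝ) < γ := by linarith [hγ.1]
  -- one-step inequality
  have hstep : ∀ s s' : ℝ, 0 ≤ s → s ≤ s' →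
      dopaObj F (w s') (p (w s')) ≤ dopaObj F (w s) (p (w s))
        + (s' - s) * c * pk + c^2 * B * pk ^ γ * s' * (s' - s) := by
    intro s s' hs hss'
    have hgl := grad_lb hp (w s') (w s)
    have hsum : ∑ m, (w s m - w s' m) * p (w s') m = (s - s') * c * p (w s') k := by
      have : ∀ m, (w s m - w s' m) * p (w s') m
          = if m = k then (s - s') * c * p (w s') k else 0 := by
        intro m
        rcases eq_or_ne m k with rfl | hm
        · have hwm : ∀ s : ℝ, w s m = u m + s * c := fun s => by simp [hw]
          rw [if_pos rfl, hwm, hwm]; ring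
        · have hwm : ∀ s : ℝ, w s m = u m := fun s => by simp [hw, if_neg hm]
          rw [if_neg hm, hwm, hwm]; ring
      rw [Finset.sum_congr rfl (fun m _ => this m), Finset.sum_ite_eq' Finset.univ k]
      simp
    rw [hsum] at hgl
    -- Lipschitz bound from u to w s'
    have hlip := lipschitz hmono hderiv h01 hbot htop hstrict hint hzero hγ hB hgrowth hp
      u k (ε := s' * (-c)) (by nlinarith)
    have hweq : (fun m => u m - if m = k then s' * (-c) else 0) = w s' := by
      funext m
      simp only [hw]
      split_ifs with h <;> ring
    rw [hweq] at hlip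
    have h1 : 0 ≤ pk - p (w s') k := hlip.1
    have h2 : pk - p (w s') k ≤ B * pk ^ γ * (s' * (-c)) := hlip.2
    have hfac : 0 ≤ (s' - s) * (-c) := mul_nonneg (by linarith) (by linarith)
    have h3 := mul_le_mul_of_nonneg_left h2 hfac
    nlinarith [hgl, h3]
  -- discretized telescoping
  have hiter : ∀ n : ℕ, 1 ≤ n → ∀ i : ℕ, i ≤ n →
      dopaObj F (w (i / n)) (p (w (i / n))) ≤ dopaObj F u (p u)
        + ((i:ℝ) / n) * c * pk + c^2 * B * pk ^ γ * (((i:ℝ) * ((i:ℝ) + 1)) / (2 * (n:ℝ)^2)) := by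
    intro n hn i
    induction i with
    | zero =>
      intro _
      have h0 : ((0:ℕ):ℝ) / (n:ℝ) = 0 := by norm_num
      rw [h0, hw0]
      norm_num
    | succ i ih =>
      intro hisn
      have hi_le : i ≤ n := le_trans (Nat.le_succ i) hisn
      have ihh := ih hi_le
      have hnpos : (0:ℝ) < n := by
        have : 0 < n := hn
        exact_mod_cast this
      have hnne : (n:ℝ) ≠ 0 := ne_of_gt hnpos
      have hs0 : (0:ℝ) ≤ (i:ℝ) / n := by positivity
      have hss' : (i:ℝ) / n ≤ ((i:ℝ) + 1) / n := by
        gcongr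
        linarith
      have step := hstep ((i:ℝ)/n) (((i:ℝ)+1)/n) hs0 hss'
      have key : dopaObj F u (p u) + ((i:ℝ)/n)*c*pk
            + c^2*B*pk^γ*(((i:ℝ)*((i:ℝ)+1))/(2*(n:ℝ)^2))
            + ((((i:ℝ)+1)/n) - (i:ℝ)/n)*c*pk
            + c^2*B*pk^γ*((((i:ℝ)+1)/n))*((((i:ℝ)+1)/n) - (i:ℝ)/n)
          = dopaObj F u (p u) + (((i:ℝ)+1)/n)*c*pk
            + c^2*B*pk^γ*((((i:ℝ)+1)*(((i:ℝ)+1)+1))/(2*(n:ℝ)^2)) := by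
        field_simp
        ring
      have hc1 : ((i+1:ℕ):ℝ) = (i:ℝ)+1 := by push_cast; ring
      rw [hc1]
      linarith [step, ihh, key]
  -- pass to the limit n → ∞
  have hfin : ∀ n : ℕ, 1 ≤ n →
      dopaObj F (w 1) (p (w 1)) ≤ dopaObj F u (p u) + c * pk
        + c^2*B*pk^γ * (((n:ℝ)*((n:ℝ)+1))/(2*(n:ℝ)^2)) := by
    intro n hn
    have h := hiter n hn n le_rfl
    have hnne : (n:ℝ) ≠ 0 := Nat.cast_ne_zero.mpr (by omega)
    rw [div_self hnne] at h
    linarith [h]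
  have hlim : Tendsto (fun n : ℕ => dopaObj F u (p u) + c * pk
        + c^2*B*pk^γ * (((n:ℝ)*((n:ℝ)+1))/(2*(n:ℝ)^2))) atTop
      (nhds (dopaObj F u (p u) + c * pk + c^2*B*pk^γ * (1/2))) := by
    apply Tendsto.const_add
    apply Tendsto.const_mul
    have h1 : Tendsto (fun n : ℕ => ((1:ℝ) + 1/(n:ℝ))/2) atTop (nhds (1/2)) := by
      have h2 := tendsto_one_div_atTop_nhds_zero_nat (𝕜 := ℝ)
      have h3 := ((tendsto_const_nhds (x := (1:ℝ)) (f := atTop (α := ℕ))).add h2).div_const 2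
      simpa using h3
    apply h1.congr'
    filter_upwards [eventually_ge_atTop 1] with n hn
    have hnne : (n:ℝ) ≠ 0 := Nat.cast_ne_zero.mpr (by omega)
    field_simp
  have hle : dopaObj F (w 1) (p (w 1))
      ≤ dopaObj F u (p u) + c * pk + c^2*B*pk^γ * (1/2) := by
    apply ge_of_tendsto hlim
    filter_upwards [eventually_ge_atTop 1] with n hn
    exact hfin n hn
  rw [hw1] at hle
  linarith [hle]

lemma jensen_rpow {K : ℕ} (hK : 1 ≤ K) {γ : ℝ} (hγ : γ ∈ Ioo (1:ℝ) 2)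
    (P : Fin K → ℝ) (hpos : ∀ a, 0 < P a) (hsum : ∑ a, P a = 1) :
    ∑ a, (P a) ^ (γ - 1) ≤ (K:ℝ) ^ ((2:ℝ) - γ) := by
  have hKpos : (0:ℝ) < K := by exact_mod_cast hK
  have hγ1 : (0:ℝ) < γ - 1 := by linarith [hγ.1]
  have hγ2 : γ - 1 < 1 := by linarith [hγ.2]
  have hmean := Real.arith_mean_le_rpow_mean Finset.univ (fun _ => 1/(K:ℝ))
    (fun a => (P a) ^ (γ - 1)) (fun _ _ => by positivity)
    (by rw [Finset.sum_const, Finset.card_univ, Fintype.card_fin, nsmul_eq_mul]; field_simp)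
    (fun a _ => Real.rpow_nonneg (hpos a).le _) (p := 1/(γ-1)) (by
      rw [le_div_iff₀ hγ1]; linarith)
  have hzp : ∀ a : Fin K, ((P a) ^ (γ-1)) ^ (1/(γ-1)) = P a := by
    intro a
    rw [← Real.rpow_mul (hpos a).le, mul_one_div, div_self (ne_of_gt hγ1), Real.rpow_one]
  simp only [hzp] at hmean
  rw [← Finset.mul_sum, ← Finset.mul_sum, hsum, mul_one, one_div_one_div] at hmean
  have hS : ∑ a, (P a)^(γ-1) ≤ (K:ℝ) * ((1/(K:ℝ))^(γ-1)) := by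
    calc ∑ a, (P a)^(γ-1) = (K:ℝ) * (1/(K:ℝ) * ∑ a, (P a)^(γ-1)) := by
          field_simp
      _ ≤ (K:ℝ) * ((1/(K:ℝ))^(γ-1)) := mul_le_mul_of_nonneg_left hmean hKpos.le
  have heq : (K:ℝ) * ((1/(K:ℝ))^(γ-1)) = (K:ℝ)^((2:ℝ)-γ) := by
    rw [one_div, ← Real.rpow_neg_one (K:ℝ), ← Real.rpow_mul hKpos.le]
    nth_rewrite 1 [← Real.rpow_one (K:ℝ)]
    rw [← Real.rpow_add hKpos]
    congr 1
    ring
  rw [heq] at hS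
  exact hS
include hmono hderiv h01 hbot htop hstrict hint hzero hγ hB hgrowth hp in
lemma stepE (hK : 1 ≤ K) (w : Fin K → ℝ) (rv : Fin K → ℝ)
    (hrv : ∀ a, rv a ∈ Icc (-1:ℝ) 0) :
    ∑ a, p w a * dopaObj F (fun m => w m + if m = a then rv a / p w a else 0)
        (p (fun m => w m + if m = a then rv a / p w a else 0))
    ≤ dopaObj F w (p w) + ∑ a, p w a * rv a + (1/2) * B * (K:ℝ)^((2:ℝ)-γ) := by
  have hpos := (hp w).2.1
  have hsum := (hp w).1.2
  have key : ∀ a, p w a * dopaObj F (fun m => w m + if m = a then rv a / p w a else 0)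
      (p (fun m => w m + if m = a then rv a / p w a else 0))
      ≤ p w a * dopaObj F w (p w) + p w a * rv a + (1/2) * B * (p w a)^(γ-1) := by
    intro a
    have hc : rv a / p w a ≤ 0 :=
      div_nonpos_of_nonpos_of_nonneg (hrv a).2 (hpos a).le
    have hst := stability hmono hderiv h01 hbot htop hstrict hint hzero hγ hB hgrowth hp
      w a hc
    have hmul := mul_le_mul_of_nonneg_left hst (hpos a).le
    have e1 : p w a * (rv a / p w a * p w a) = p w a * rv a := by
      rw [div_mul_cancel₀ _ (ne_of_gt (hpos a))]
    have e2 : p w a * ((1/2) * B * (rv a / p w a)^2 * (p w a)^γ)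
        = (1/2) * B * (rv a)^2 * (p w a)^(γ-1) := by
      have hpne : p w a ≠ 0 := ne_of_gt (hpos a)
      have hpγ : (p w a)^γ = (p w a)^(γ-1) * p w a := by
        rw [← Real.rpow_add_one hpne]
        congr 1; ring
      have hcp : rv a / p w a * p w a = rv a := div_mul_cancel₀ _ hpne
      calc p w a * ((1/2) * B * (rv a / p w a)^2 * (p w a)^γ)
          = (1/2) * B * (rv a / p w a * p w a)^2 * (p w a)^(γ-1) := by
            rw [hpγ]; ring
        _ = (1/2) * B * (rv a)^2 * (p w a)^(γ-1) := by rw [hcp]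
    have e3 : (1/2) * B * (rv a)^2 * (p w a)^(γ-1) ≤ (1/2) * B * (p w a)^(γ-1) := by
      have hr2 : (rv a)^2 ≤ 1 := by nlinarith [(hrv a).1, (hrv a).2]
      have hpow : (0:ℝ) ≤ (p w a)^(γ-1) := Real.rpow_nonneg (hpos a).le _
      have h4 := mul_le_mul_of_nonneg_left (mul_le_mul_of_nonneg_right hr2 hpow)
        (by linarith : (0:ℝ) ≤ (1/2)*B)
      linarith [h4]
    calc p w a * dopaObj F (fun m => w m + if m = a then rv a / p w a else 0)
          (p (fun m => w m + if m = a then rv a / p w a else 0))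
        ≤ p w a * (dopaObj F w (p w) + rv a / p w a * p w a
            + (1/2) * B * (rv a / p w a)^2 * (p w a)^γ) := by
          exact hmul
      _ = p w a * dopaObj F w (p w) + p w a * rv a
            + (1/2) * B * (rv a)^2 * (p w a)^(γ-1) := by
          rw [mul_add, mul_add, e1, e2]
      _ ≤ p w a * dopaObj F w (p w) + p w a * rv a
            + (1/2) * B * (p w a)^(γ-1) := by linarith [e3]
  calc ∑ a, p w a * dopaObj F (fun m => w m + if m = a then rv a / p w a else 0)
        (p (fun m => w m + if m = a then rv a / p w a else 0))
      ≤ ∑ a, (p w a * dopaObj F w (p w) + p w a * rv a + (1/2) * B * (p w a)^(γ-1)) :=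
        Finset.sum_le_sum (fun a _ => key a)
    _ = dopaObj F w (p w) + ∑ a, p w a * rv a + (1/2) * B * ∑ a, (p w a)^(γ-1) := by
        rw [Finset.sum_add_distrib, Finset.sum_add_distrib, ← Finset.sum_mul,
          ← Finset.mul_sum, hsum, one_mul]
    _ ≤ dopaObj F w (p w) + ∑ a, p w a * rv a + (1/2) * B * (K:ℝ)^((2:ℝ)-γ) := by
        have hj := jensen_rpow hK hγ (p w) hpos hsum
        have h5 := mul_le_mul_of_nonneg_left hj (by linarith : (0:ℝ) ≤ (1/2)*B)
        linarith [h5]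
include hmono hderiv h01 hbot htop hstrict hint hzero hγ hB hgrowth hp in
lemma telescope (hK : 1 ≤ K) (r : List (Fin K) → Fin K → ℝ)
    (hr : ∀ h a, r h a ∈ Icc (-1:ℝ) 0) (t : ℕ) :
    ∑ f : Fin t → Fin K, histProb r p (List.ofFn f).reverse *
      (dopaObj F (uhat r p (List.ofFn f).reverse) (p (uhat r p (List.ofFn f).reverse))
        - cumReward r (List.ofFn f).reverse)
    ≤ dopaObj F 0 (p 0) + t * ((1/2) * B * (K:ℝ)^((2:ℝ)-γ)) := by
  have hppos : ∀ u a, 0 < p u a := fun u a => (hp u).2.1 a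
  have hpsum : ∀ u, ∑ a, p u a = 1 := fun u => (hp u).1.2
  set C : ℝ := (1/2) * B * (K:ℝ)^((2:ℝ)-γ) with hC
  induction t with
  | zero =>
    have h1 : ∀ f : Fin 0 → Fin K, histProb r p (List.ofFn f).reverse *
        (dopaObj F (uhat r p (List.ofFn f).reverse) (p (uhat r p (List.ofFn f).reverse))
          - cumReward r (List.ofFn f).reverse) = dopaObj F 0 (p 0) := by
      intro f
      rw [List.ofFn_zero, List.reverse_nil, histProb, cumReward]
      have : uhat r p ([] : List (Fin K)) = (0 : Fin K → ℝ) := by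
        funext m; rw [uhat]; rfl
      rw [this]
      ring
    rw [Finset.sum_congr rfl (fun f _ => h1 f), Finset.sum_const, Finset.card_univ]
    simp
  | succ t ih =>
    rw [hsum_succ t (fun h => histProb r p h *
      (dopaObj F (uhat r p h) (p (uhat r p h)) - cumReward r h))]
    have key : ∀ f : Fin t → Fin K,
        ∑ a, histProb r p (a :: (List.ofFn f).reverse) *
          (dopaObj F (uhat r p (a :: (List.ofFn f).reverse))
              (p (uhat r p (a :: (List.ofFn f).reverse)))
            - cumReward r (a :: (List.ofFn f).reverse))
        ≤ histProb r p (List.ofFn f).reverse *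
            (dopaObj F (uhat r p (List.ofFn f).reverse) (p (uhat r p (List.ofFn f).reverse))
              - cumReward r (List.ofFn f).reverse)
          + histProb r p (List.ofFn f).reverse * C := by
      intro f
      set h := (List.ofFn f).reverse with hh
      set w := uhat r p h with hwdef
      have hPn : 0 ≤ histProb r p h := histProb_nonneg r p hppos h
      have hua : ∀ a : Fin K, uhat r p (a :: h)
          = fun m => w m + if m = a then r h a / p w a else 0 := by
        intro a; funext m; rw [uhat]
      have hse := stepE hmono hderiv h01 hbot htop hstrict hint hzero hγ hB hgrowth hp
        hK w (fun a => r h a) (fun a => hr h a)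
      have hexp : ∑ a, histProb r p (a :: h) *
          (dopaObj F (uhat r p (a :: h)) (p (uhat r p (a :: h))) - cumReward r (a :: h))
          = histProb r p h * (∑ a, p w a *
              dopaObj F (fun m => w m + if m = a then r h a / p w a else 0)
                (p (fun m => w m + if m = a then r h a / p w a else 0)))
            - histProb r p h * cumReward r h
            - histProb r p h * (∑ a, p w a * r h a) := by
        have hterm : ∀ a : Fin K, histProb r p (a :: h) *
            (dopaObj F (uhat r p (a :: h)) (p (uhat r p (a :: h))) - cumReward r (a :: h))
            = histProb r p h * (p w a *
                dopaObj F (fun m => w m + if m = a then r h a / p w a else 0)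
                  (p (fun m => w m + if m = a then r h a / p w a else 0)))
              - histProb r p h * (p w a) * cumReward r h
              - histProb r p h * (p w a * r h a) := by
          intro a
          rw [show histProb r p (a :: h) = histProb r p h * p w a from by rw [histProb],
            show cumReward r (a :: h) = cumReward r h + r h a from by rw [cumReward],
            hua a]
          ring
        rw [Finset.sum_congr rfl (fun a _ => hterm a), Finset.sum_sub_distrib,
          Finset.sum_sub_distrib, ← Finset.mul_sum, ← Finset.mul_sum, ← Finset.sum_mul,
          ← Finset.mul_sum, hpsum, mul_one]
      rw [hexp]
      have hmul := mul_le_mul_of_nonneg_left hse hPn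
      rw [← hC] at hmul
      have hgoal : histProb r p h * (dopaObj F w (p w) + (∑ a, p w a * r h a) + C)
          - histProb r p h * cumReward r h - histProb r p h * (∑ a, p w a * r h a)
          = histProb r p h * (dopaObj F w (p w) - cumReward r h) + histProb r p h * C := by
        ring
      linarith [hmul, hgoal.le]
    calc ∑ f : Fin t → Fin K, ∑ a, histProb r p (a :: (List.ofFn f).reverse) *
          (dopaObj F (uhat r p (a :: (List.ofFn f).reverse))
              (p (uhat r p (a :: (List.ofFn f).reverse)))
            - cumReward r (a :: (List.ofFn f).reverse))
        ≤ ∑ f : Fin t → Fin K, (histProb r p (List.ofFn f).reverse *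
            (dopaObj F (uhat r p (List.ofFn f).reverse) (p (uhat r p (List.ofFn f).reverse))
              - cumReward r (List.ofFn f).reverse)
          + histProb r p (List.ofFn f).reverse * C) := Finset.sum_le_sum (fun f _ => key f)
      _ = (∑ f : Fin t → Fin K, histProb r p (List.ofFn f).reverse *
            (dopaObj F (uhat r p (List.ofFn f).reverse) (p (uhat r p (List.ofFn f).reverse))
              - cumReward r (List.ofFn f).reverse))
          + (∑ f : Fin t → Fin K, histProb r p (List.ofFn f).reverse) * C := by
          rw [Finset.sum_add_distrib, ← Finset.sum_mul]
      _ ≤ (dopaObj F 0 (p 0) + t * C) + 1 * C := by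
          rw [sumP r p hppos hpsum t]
          exact add_le_add ih le_rfl
      _ = dopaObj F 0 (p 0) + (t+1 : ℕ) * C := by push_cast; ring
end Main


theorem stmt16 (K : ℕ) (hK : 1 ≤ K) (F F' : Fin K → ℝ → ℝ)
    (hmono : ∀ k, Monotone (F k))
    (hderiv : ∀ k s, HasDerivAt (F k) (F' k s) s)
    (h01 : ∀ k s, F k s ∈ Ico (0:ℝ) 1)
    (hbot : ∀ k, Tendsto (F k) atBot (nhds 0))
    (htop : ∀ k, Tendsto (F k) atTop (nhds 1))
    (hstrict : ∀ k, StrictMonoOn (F k) {s | F k s ∈ Ioo (0:ℝ) 1})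
    (hint : ∀ k, IntegrableOn (quantile (F k)) (Ioo (0:ℝ) 1))
    (hzero : ∀ k, ∫ t in (0:ℝ)..1, quantile (F k) t = 0)
    (γ B : ℝ) (hγ : γ ∈ Ioo (1:ℝ) 2) (hB : 0 < B)
    (hgrowth : ∀ k, ∀ q ∈ Ioo (0:ℝ) 1, F' k (quantile (F k) (1 - q)) ≤ B * q ^ γ)
    (p : (Fin K → ℝ) → (Fin K → ℝ))
    (hp : ∀ u, p u ∈ simplex K ∧ (∀ k, 0 < p u k) ∧
      IsMaxOn (dopaObj F u) (simplex K) (p u) ∧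
      ∀ q ∈ simplex K, IsMaxOn (dopaObj F u) (simplex K) q → q = p u)
    (T : ℕ) (hT : 1 ≤ T)
    (r : List (Fin K) → Fin K → ℝ) (hr : ∀ h k, r h k ∈ Icc (-1:ℝ) 0) :
    regret K T r p ≤
      (∑ k, ∫ t in (1 - p 0 k)..1, quantile (F k) t) +
        (1 / 2) * B * T * (K : ℝ) ^ ((2:ℝ) - γ) := by
  haveI : Nonempty (Fin K) := ⟨⟨0, hK⟩⟩
  have hppos : ∀ u a, 0 < p u a := fun u a => (hp u).2.1 a
  have hpsum : ∀ u, ∑ a, p u a = 1 := fun u => (hp u).1.2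
  set C : ℝ := (1/2) * B * (K:ℝ)^((2:ℝ)-γ) with hC
  set X : ℝ := ∑ f : Fin T → Fin K, histProb r p (List.ofFn f).reverse *
      dopaObj F (uhat r p (List.ofFn f).reverse) (p (uhat r p (List.ofFn f).reverse)) with hX
  set Y : ℝ := ∑ f : Fin T → Fin K, histProb r p (List.ofFn f).reverse *
      cumReward r (List.ofFn f).reverse with hY
  have htel := telescope hmono hderiv h01 hbot htop hstrict hint hzero hγ hB hgrowth hp
    hK r hr T
  have hXY : X - Y ≤ dopaObj F 0 (p 0) + T * C := by
    rw [hX, hY, ← Finset.sum_sub_distrib]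
    have : ∀ f : Fin T → Fin K, histProb r p (List.ofFn f).reverse *
        dopaObj F (uhat r p (List.ofFn f).reverse) (p (uhat r p (List.ofFn f).reverse))
        - histProb r p (List.ofFn f).reverse * cumReward r (List.ofFn f).reverse
        = histProb r p (List.ofFn f).reverse *
          (dopaObj F (uhat r p (List.ofFn f).reverse) (p (uhat r p (List.ofFn f).reverse))
            - cumReward r (List.ofFn f).reverse) := by
      intro f; ring
    rw [Finset.sum_congr rfl (fun f _ => this f)]
    exact htel
  have hsup : ∀ k : Fin K, ∑ f : Fin T → Fin K,
      histProb r p (List.ofFn f).reverse * cumArm r k (List.ofFn f).reverse ≤ X := by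
    intro k
    rw [← unbiased r p hppos hpsum T k, hX]
    apply Finset.sum_le_sum
    intro f _
    apply mul_le_mul_of_nonneg_left _ (histProb_nonneg r p hppos _)
    exact vertex_le hmono hderiv h01 hbot htop hstrict hint hzero hp
      (uhat r p (List.ofFn f).reverse) k
  have hphi0 : dopaObj F 0 (p 0) = ∑ k, ∫ t in (1 - p 0 k)..1, quantile (F k) t := by
    rw [dopaObj]
    have : ∑ k, (0 : Fin K → ℝ) k * p 0 k = 0 := by
      apply Finset.sum_eq_zero
      intro k _
      simp
    rw [this, zero_add]
  rw [regret]
  have hsup2 : (⨆ k : Fin K, ∑ f : Fin T → Fin K,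
      histProb r p (List.ofFn f).reverse * cumArm r k (List.ofFn f).reverse) ≤ X :=
    ciSup_le hsup
  have hfinal : X - Y ≤ (∑ k, ∫ t in (1 - p 0 k)..1, quantile (F k) t)
      + (1 / 2) * B * T * (K : ℝ) ^ ((2:ℝ) - γ) := by
    rw [← hphi0]
    calc X - Y ≤ dopaObj F 0 (p 0) + T * C := hXY
      _ = dopaObj F 0 (p 0) + (1 / 2) * B * T * (K : ℝ) ^ ((2:ℝ) - γ) := by
        rw [hC]; ring
  rw [← hY]
  linarith [hsup2, hfinal]
end
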